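/- arXiv:2307.10158 — 4 statements merged into one kernel-verified Lean document; each statement's English description precedes it below -/
import Mathlib

section
/- Let pen be a real-valued polyhedral gauge on ℝ^p, i.e. pen(b) = max{⟨u_1,b⟩,…,⟨u_k,b⟩} for finitely many vectors u_1,…,u_k ∈ ℝ^p with u_1 = 0. Then for every β ∈ ℝ^p, the linear span of the pattern equivalence class C_β equals the orthogonal complement of the direction space of the affine hull of ∂pen(β), i.e. lin(C_β) = (vec-aff(∂pen(β)))^⊥. -/
open scoped RealInnerProductSpace

noncomputable section

/-- Convert a plain coordinate vector to an element of Euclidean space. -/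
def toEuc {n : ℕ} (v : Fin n → ℝ) : EuclideanSpace ℝ (Fin n) :=
  (WithLp.equiv 2 (Fin n → ℝ)).symm v

/-- The subdifferential of `φ : ℝ^p → ℝ` at `β`:
`∂φ(β) = {s : φ(β) + ⟪s, b − β⟫ ≤ φ(b) for all b}`. -/
def subdiff {p : ℕ} (φ : EuclideanSpace ℝ (Fin p) → ℝ) (β : EuclideanSpace ℝ (Fin p)) :
    Set (EuclideanSpace ℝ (Fin p)) :=
  {s | ∀ b, φ β + ⟪s, b - β⟫ ≤ φ b}

/-- `S_{X,λpen}(y)`: the set of minimizers of `b ↦ (1/2)‖y − Xb‖₂² + λ·pen(b)`. -/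
def Smin {n p : ℕ} (X : Matrix (Fin n) (Fin p) ℝ) (lam : ℝ)
    (pen : EuclideanSpace ℝ (Fin p) → ℝ) (y : EuclideanSpace ℝ (Fin n)) :
    Set (EuclideanSpace ℝ (Fin p)) :=
  {b | ∀ b' : EuclideanSpace ℝ (Fin p), (1/2) * ‖y - toEuc (X.mulVec b)‖^2 + lam * pen b
        ≤ (1/2) * ‖y - toEuc (X.mulVec b')‖^2 + lam * pen b'}

/-- The row space of a matrix `X`: `{Xᵀz : z ∈ ℝ^n}`. -/
def rowSpace {n p : ℕ} (X : Matrix (Fin n) (Fin p) ℝ) : Set (EuclideanSpace ℝ (Fin p)) :=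
  Set.range fun z : EuclideanSpace ℝ (Fin n) => toEuc (X.transpose.mulVec z)

/-- The normal cone of a set `K` at `x`: `{s : ⟪s, b − x⟫ ≤ 0 for all b ∈ K}`. -/
def normalCone' {p : ℕ} (K : Set (EuclideanSpace ℝ (Fin p))) (x : EuclideanSpace ℝ (Fin p)) :
    Set (EuclideanSpace ℝ (Fin p)) :=
  {s | ∀ b ∈ K, ⟪s, b - x⟫ ≤ 0}

/-- The supremum norm `‖x‖_∞` on Euclidean space. -/
def supNorm {p : ℕ} (x : EuclideanSpace ℝ (Fin p)) : ℝ := ⨆ i, abs (x i)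

/-- `F` is an (exposed) face of `P`: `F = {x ∈ P : ⟪a,x⟫ = c}` for some valid inequality
`⟪a,x⟫ ≤ c` of `P`. -/
def IsFace {p : ℕ} (P F : Set (EuclideanSpace ℝ (Fin p))) : Prop :=
  ∃ (a : EuclideanSpace ℝ (Fin p)) (c : ℝ),
    (∀ x ∈ P, ⟪a, x⟫ ≤ c) ∧ F = {x ∈ P | ⟪a, x⟫ = c}

/-- Characterization of the subdifferential of a polyhedral gauge:
`s ∈ ∂pen(x)` iff `⟪s,b⟫ ≤ pen b` for all `b`, and `⟪s,x⟫ = pen x`. -/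
lemma subdiff_gauge_mem_iff {p k : ℕ}
    (u : Fin (k + 1) → EuclideanSpace ℝ (Fin p))
    (pen : EuclideanSpace ℝ (Fin p) → ℝ)
    (hpen : ∀ x, pen x = Finset.univ.sup' Finset.univ_nonempty fun i => ⟪u i, x⟫)
    (x s : EuclideanSpace ℝ (Fin p)) :
    s ∈ subdiff pen x ↔ (∀ b, ⟪s, b⟫ ≤ pen b) ∧ ⟪s, x⟫ = pen x := by
  have hpen0 : pen 0 = 0 := by
    rw [hpen]
    simp
  have hpen2 : pen ((2 : ℝ) • x) = 2 * pen x := by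
    rw [hpen, hpen]
    obtain ⟨i1, -, hi1⟩ := Finset.exists_mem_eq_sup' Finset.univ_nonempty
      (fun i => ⟪u i, x⟫)
    apply le_antisymm
    · apply Finset.sup'_le
      intro i _
      have h1 : ⟪u i, x⟫ ≤ Finset.univ.sup' Finset.univ_nonempty fun i => ⟪u i, x⟫ :=
        Finset.le_sup' (fun i => ⟪u i, x⟫) (Finset.mem_univ i)
      rw [real_inner_smul_right]
      linarith
    · have h1 : ⟪u i1, (2 : ℝ) • x⟫ ≤ Finset.univ.sup' Finset.univ_nonempty
          fun i => ⟪u i, (2 : ℝ) • x⟫ :=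
        Finset.le_sup' (fun i => ⟪u i, (2 : ℝ) • x⟫) (Finset.mem_univ i1)
      rw [real_inner_smul_right] at h1
      rw [hi1]
      linarith
  constructor
  · intro hs
    have h0 := hs 0
    have h2 := hs ((2 : ℝ) • x)
    rw [hpen0, zero_sub, inner_neg_right] at h0
    have h2x : (2 : ℝ) • x - x = x := by
      rw [two_smul]; abel
    rw [hpen2, h2x] at h2
    have heq : ⟪s, x⟫ = pen x := by linarith
    refine ⟨fun b => ?_, heq⟩
    have hb := hs b
    rw [inner_sub_right] at hb
    linarith
  · rintro ⟨h1, h2⟩ b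
    rw [inner_sub_right, h2]
    have := h1 b
    linarith

/-- For a real-valued polyhedral gauge `pen`, the linear span of the pattern
equivalence class `C_β` equals the orthogonal complement of the direction space of the
affine hull of `∂pen(β)`. -/
theorem span_pattern_class_eq_orthogonal {p k : ℕ}
    (u : Fin (k + 1) → EuclideanSpace ℝ (Fin p)) (hu : u 0 = 0)
    (pen : EuclideanSpace ℝ (Fin p) → ℝ)
    (hpen : ∀ x, pen x = Finset.univ.sup' Finset.univ_nonempty fun i => ⟪u i, x⟫)
    (β : EuclideanSpace ℝ (Fin p)) :
    Submodule.span ℝ {x | subdiff pen x = subdiff pen β}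
      = ((affineSpan ℝ (subdiff pen β)).direction)ᗮ := by
  classical
  have key := subdiff_gauge_mem_iff u pen hpen
  have hB : ∀ i b, ⟪u i, b⟫ ≤ pen b := by
    intro i b
    rw [hpen]
    exact Finset.le_sup' (fun i => ⟪u i, b⟫) (Finset.mem_univ i)
  apply le_antisymm
  · rw [Submodule.span_le]
    intro x hx
    simp only [Set.mem_setOf_eq] at hx
    rw [SetLike.mem_coe, Submodule.mem_orthogonal]
    intro w hw
    rw [direction_affineSpan, vectorSpan_def] at hw
    induction hw using Submodule.span_induction with
    | mem w hw =>
      obtain ⟨s1, hs1, s2, hs2, rfl⟩ := hw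
      rw [← hx] at hs1 hs2
      have e1 := ((key x s1).1 hs1).2
      have e2 := ((key x s2).1 hs2).2
      have hvs : (fun x1 x2 => x1 -ᵥ x2) s1 s2 = s1 - s2 := rfl
      rw [hvs, inner_sub_left]
      linarith
    | zero => exact inner_zero_left x
    | add a b _ _ ha hb => rw [inner_add_left, ha, hb]; ring
    | smul r a _ ha => rw [real_inner_smul_left, ha]; ring
  · intro v hv
    rw [Submodule.mem_orthogonal] at hv
    obtain ⟨i0, -, hi0⟩ := Finset.exists_mem_eq_sup' Finset.univ_nonempty
      (fun i => ⟪u i, β⟫)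
    have hi0' : ⟪u i0, β⟫ = pen β := by rw [hpen]; exact hi0.symm
    set c : ℝ := ⟪u i0, v⟫ with hc_def
    have hu0 : u i0 ∈ subdiff pen β := (key β (u i0)).2 ⟨hB i0, hi0'⟩
    -- every element of the subdifferential has the same inner product with v
    have hc : ∀ s ∈ subdiff pen β, ⟪s, v⟫ = c := by
      intro s hs
      have hmem : s - u i0 ∈ (affineSpan ℝ (subdiff pen β)).direction := by
        rw [direction_affineSpan]
        exact vsub_mem_vectorSpan ℝ hs hu0
      have h0 := hv _ hmem
      rw [inner_sub_left] at h0
      linarith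
    -- gaps and slopes
    set g : Fin (k + 1) → ℝ := fun i => pen β - ⟪u i, β⟫ with hg_def
    set h : Fin (k + 1) → ℝ := fun i => ⟪u i, v⟫ - c with hh_def
    have hgnn : ∀ i, 0 ≤ g i := fun i => sub_nonneg.2 (hB i β)
    have hgpos : ∀ i, 0 < h i → 0 < g i := by
      intro i hhi
      rcases (hgnn i).lt_or_eq with hlt | heq
      · exact hlt
      · exfalso
        have hact : ⟪u i, β⟫ = pen β := by
          have := heq.symm
          simp only [hg_def] at this
          linarith
        have : u i ∈ subdiff pen β := (key β (u i)).2 ⟨hB i, hact⟩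
        have := hc _ this
        simp only [hh_def] at hhi
        linarith
    set E : Fin (k + 1) → ℝ := fun i => if h i ≤ 0 then 1 else g i / h i with hE_def
    have hEpos : ∀ i, 0 < E i := by
      intro i
      simp only [hE_def]
      split_ifs with hi
      · exact one_pos
      · push_neg at hi
        exact div_pos (hgpos i hi) hi
    set ε : ℝ := Finset.univ.inf' Finset.univ_nonempty E with hε_def
    have hεpos : 0 < ε := by
      rw [hε_def]
      exact (Finset.lt_inf'_iff _).mpr fun i _ => hEpos i
    have hεle : ∀ i, ε ≤ E i := fun i => Finset.inf'_le _ (Finset.mem_univ i)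
    -- penalty along the segment
    have hkey : ∀ t : ℝ, 0 ≤ t → t ≤ ε → pen (β + t • v) = pen β + t * c := by
      intro t ht hte
      have hterm : ∀ i, ⟪u i, β + t • v⟫ ≤ pen β + t * c := by
        intro i
        have h1 : t * h i ≤ g i := by
          by_cases hh : h i ≤ 0
          · have : t * h i ≤ 0 := mul_nonpos_of_nonneg_of_nonpos ht hh
            linarith [hgnn i]
          · push_neg at hh
            have hte' : t ≤ g i / h i := by
              have := hεle i
              simp only [hE_def, if_neg (not_le.2 hh)] at this
              linarith
            calc t * h i ≤ (g i / h i) * h i := by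
                  exact mul_le_mul_of_nonneg_right hte' hh.le
              _ = g i := by field_simp
        have h2 : ⟪u i, v⟫ = h i + c := by simp [hh_def]
        rw [inner_add_right, real_inner_smul_right, h2]
        have h3 : g i = pen β - ⟪u i, β⟫ := rfl
        nlinarith [h1]
      rw [hpen]
      apply le_antisymm
      · exact Finset.sup'_le _ _ fun i _ => hterm i
      · have h1 : ⟪u i0, β + t • v⟫ ≤ Finset.univ.sup' Finset.univ_nonempty
            fun i => ⟪u i, β + t • v⟫ :=
          Finset.le_sup' (fun i => ⟪u i, β + t • v⟫) (Finset.mem_univ i0)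
        rw [inner_add_right, real_inner_smul_right, hi0'] at h1
        linarith
    -- the shifted point has the same subdifferential
    have hx : subdiff pen (β + (ε / 2) • v) = subdiff pen β := by
      ext s
      rw [key, key]
      have hk1 : pen (β + (ε / 2) • v) = pen β + (ε / 2) * c :=
        hkey (ε / 2) (by linarith) (by linarith)
      have hk2 : pen (β + ε • v) = pen β + ε * c := hkey ε (by linarith) le_rfl
      constructor
      · rintro ⟨hBs, hsx⟩
        refine ⟨hBs, ?_⟩
        have h1 : ⟪s, β + ε • v⟫ ≤ pen β + ε * c := by
          have := hBs (β + ε • v)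
          rw [hk2] at this
          exact this
        have h2 : ⟪s, β + (ε / 2) • v⟫ = pen β + (ε / 2) * c := by rw [hsx, hk1]
        rw [inner_add_right, real_inner_smul_right] at h1 h2
        have hsv : ⟪s, v⟫ ≤ c := by nlinarith [hεpos]
        have hge : pen β ≤ ⟪s, β⟫ := by nlinarith [hεpos]
        exact le_antisymm (hBs β) hge
      · rintro ⟨hBs, hsβ⟩
        refine ⟨hBs, ?_⟩
        have hsv : ⟪s, v⟫ = c := hc s ((key β s).2 ⟨hBs, hsβ⟩)
        rw [inner_add_right, real_inner_smul_right, hsβ, hsv, hk1]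
    -- conclude: v is a combination of two elements of the pattern class
    have hv_eq : v = (2 / ε) • ((β + (ε / 2) • v) - β) := by
      rw [add_sub_cancel_left, smul_smul]
      rw [show (2 / ε) * (ε / 2) = 1 by field_simp, one_smul]
    rw [hv_eq]
    apply Submodule.smul_mem
    exact Submodule.sub_mem _
      (Submodule.subset_span (by simpa [Set.mem_setOf_eq] using hx))
      (Submodule.subset_span (by simp [Set.mem_setOf_eq]))
end
end

section
/- Let pen be a real-valued polyhedral gauge on ℝ^p, i.e. pen(b) = max{⟨u_1,b⟩,…,⟨u_k,b⟩} for finitely many vectors u_1,…,u_k ∈ ℝ^p with u_1 = 0, and let β ∈ ℝ^p. Then the complexity of the pattern of β, i.e. the dimension of the linear span of C_β, equals p minus the dimension of the face ∂pen(β), where the dimension of ∂pen(β) is the dimension of the direction space of its affine hull. -/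
open scoped RealInnerProductSpace

noncomputable section

section Aux

variable {p k : ℕ} {u : Fin (k + 1) → EuclideanSpace ℝ (Fin p)}
  {pen : EuclideanSpace ℝ (Fin p) → ℝ}

lemma pen_le (hpen : ∀ x, pen x = Finset.univ.sup' Finset.univ_nonempty fun i : Fin (k+1) => ⟪u i, x⟫)
    (b : EuclideanSpace ℝ (Fin p)) (i : Fin (k + 1)) : ⟪u i, b⟫ ≤ pen b := by
  rw [hpen]; exact Finset.le_sup' (fun j : Fin (k+1) => ⟪u j, b⟫) (Finset.mem_univ i)

lemma mem_subdiff_iff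
    (hpen : ∀ x, pen x = Finset.univ.sup' Finset.univ_nonempty fun i : Fin (k+1) => ⟪u i, x⟫)
    (s y : EuclideanSpace ℝ (Fin p)) :
    s ∈ subdiff pen y ↔ (∀ b, ⟪s, b⟫ ≤ pen b) ∧ ⟪s, y⟫ = pen y := by
  constructor
  · intro h
    have h0 : pen y + ⟪s, 0 - y⟫ ≤ pen 0 := h 0
    have hp0 : pen 0 ≤ 0 := by
      rw [hpen]; apply Finset.sup'_le; intro i _; simp
    have h2 : pen y + ⟪s, (y + y) - y⟫ ≤ pen (y + y) := h (y + y)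
    have hpy2 : pen (y + y) ≤ 2 * pen y := by
      rw [hpen]; apply Finset.sup'_le; intro i _
      have := pen_le hpen y i
      rw [inner_add_right]; linarith
    rw [zero_sub, inner_neg_right] at h0
    rw [add_sub_cancel_right] at h2
    have heq : ⟪s, y⟫ = pen y := le_antisymm (by linarith) (by linarith)
    refine ⟨fun b => ?_, heq⟩
    have hb := h b
    rw [inner_sub_right] at hb; linarith
  · rintro ⟨h1, h2⟩ b
    rw [inner_sub_right]
    have := h1 b; linarith

end Aux

/-- For a real-valued polyhedral gauge `pen`, the complexity of the pattern
of `β` (the dimension of the linear span of `C_β`) equals `p` minus the dimension of the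
face `∂pen(β)` (the dimension of the direction space of its affine hull). -/


theorem pattern_complexity_eq_codim {p k : ℕ}
    (u : Fin (k + 1) → EuclideanSpace ℝ (Fin p)) (hu : u 0 = 0)
    (pen : EuclideanSpace ℝ (Fin p) → ℝ)
    (hpen : ∀ x, pen x = Finset.univ.sup' Finset.univ_nonempty fun i => ⟪u i, x⟫)
    (β : EuclideanSpace ℝ (Fin p)) :
    Module.finrank ℝ (Submodule.span ℝ {x | subdiff pen x = subdiff pen β})
      = p - Module.finrank ℝ (affineSpan ℝ (subdiff pen β)).direction := by
  classical
  set F : Set (EuclideanSpace ℝ (Fin p)) := subdiff pen β with hF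
  set W : Submodule ℝ (EuclideanSpace ℝ (Fin p)) := (affineSpan ℝ F).direction with hWdef
  set C : Set (EuclideanSpace ℝ (Fin p)) := {x | subdiff pen x = subdiff pen β} with hC
  have hWspan : W = Submodule.span ℝ (F -ᵥ F) := by
    rw [hWdef, direction_affineSpan]; rfl
  -- Step 1 : C ⊆ Wᗮ
  have step1 : C ⊆ (Wᗮ : Set (EuclideanSpace ℝ (Fin p))) := by
    intro x hx
    have hx' : subdiff pen x = F := hx
    rw [SetLike.mem_coe, Submodule.mem_orthogonal]
    rw [hWspan]
    intro w hw
    induction hw using Submodule.span_induction with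
    | mem w hw =>
        obtain ⟨a, ha, b, hb, rfl⟩ := hw
        have haa : ⟪a, x⟫ = pen x := ((mem_subdiff_iff hpen a x).mp (hx' ▸ ha)).2
        have hbb : ⟪b, x⟫ = pen x := ((mem_subdiff_iff hpen b x).mp (hx' ▸ hb)).2
        show ⟪a - b, x⟫ = 0
        rw [inner_sub_left, haa, hbb, sub_self]
    | zero => simp
    | add w₁ w₂ _ _ h1 h2 => rw [inner_add_left, h1, h2, add_zero]
    | smul a w _ h => rw [real_inner_smul_left, h, mul_zero]
  -- pick an active index
  obtain ⟨i0, -, hi0⟩ := Finset.exists_mem_eq_sup' (Finset.univ_nonempty (α := Fin (k + 1)))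
    (fun i => ⟪u i, β⟫)
  have hi0' : ⟪u i0, β⟫ = pen β := by rw [hpen]; exact hi0.symm
  have hui0F : u i0 ∈ F := (mem_subdiff_iff hpen _ _).mpr ⟨fun b => pen_le hpen b i0, hi0'⟩
  -- Step 2 : Wᗮ ≤ span C
  have step2 : Wᗮ ≤ Submodule.span ℝ C := by
    intro v hv
    set c : ℝ := ⟪u i0, v⟫ with hc
    have hFv : ∀ s ∈ F, ⟪s, v⟫ = c := by
      intro s hs
      have hmem : s -ᵥ u i0 ∈ W :=
        AffineSubspace.vsub_mem_direction (mem_affineSpan ℝ hs) (mem_affineSpan ℝ hui0F)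
      have h0 : ⟪s - u i0, v⟫ = 0 := (Submodule.mem_orthogonal W v).mp hv _ hmem
      rw [inner_sub_left] at h0; linarith
    have hact : ∀ i : Fin (k + 1), ⟪u i, β⟫ = pen β → ⟪u i, v⟫ = c := fun i hi =>
      hFv (u i) ((mem_subdiff_iff hpen _ _).mpr ⟨fun b => pen_le hpen b i, hi⟩)
    set S : Finset (Fin (k + 1)) :=
      Finset.univ.filter (fun i => 0 < ⟪u i, v⟫ - c ∧ 0 < pen β - ⟪u i, β⟫) with hS
    set ε0 : ℝ := if h : S.Nonempty then
        min 1 (S.inf' h fun i => (pen β - ⟪u i, β⟫) / (⟪u i, v⟫ - c)) else 1 with hε0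
    have hε0pos : 0 < ε0 := by
      rw [hε0]
      split
      · rename_i h
        refine lt_min one_pos ?_
        rw [Finset.lt_inf'_iff]
        intro i hi
        rw [hS, Finset.mem_filter] at hi
        exact div_pos hi.2.2 hi.2.1
      · exact one_pos
    have key : ∀ τ : ℝ, 0 ≤ τ → τ ≤ ε0 → pen (β + τ • v) = pen β + τ * c := by
      intro τ hτ0 hτ
      apply le_antisymm
      · rw [hpen]
        apply Finset.sup'_le
        intro i _
        rw [inner_add_right, real_inner_smul_right]
        have hib : ⟪u i, β⟫ ≤ pen β := pen_le hpen β i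
        by_cases hdi : ⟪u i, v⟫ - c ≤ 0
        · nlinarith
        · push_neg at hdi
          by_cases hgi : 0 < pen β - ⟪u i, β⟫
          · have hiS : i ∈ S := by
              rw [hS, Finset.mem_filter]; exact ⟨Finset.mem_univ i, hdi, hgi⟩
            have hSne : S.Nonempty := ⟨i, hiS⟩
            have hε0le : ε0 ≤ (pen β - ⟪u i, β⟫) / (⟪u i, v⟫ - c) := by
              rw [hε0, dif_pos hSne]
              exact le_trans (min_le_right _ _) (Finset.inf'_le _ hiS)
            have hτd : τ * (⟪u i, v⟫ - c) ≤ pen β - ⟪u i, β⟫ := by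
              rw [← le_div_iff₀ hdi] at *
              exact le_trans hτ hε0le
            nlinarith
          · have hieq : ⟪u i, β⟫ = pen β := le_antisymm hib (by linarith)
            have := hact i hieq
            nlinarith
      · have h := pen_le hpen (β + τ • v) i0
        rw [inner_add_right, real_inner_smul_right] at h
        rw [hi0'] at h
        linarith
    -- the shifted point
    set x : EuclideanSpace ℝ (Fin p) := β + (ε0 / 2) • v with hxdef
    have hxC : x ∈ C := by
      show subdiff pen x = subdiff pen β
      ext s
      rw [mem_subdiff_iff hpen, mem_subdiff_iff hpen]
      have hpx : pen x = pen β + (ε0 / 2) * c := key (ε0 / 2) (by linarith) (by linarith)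
      constructor
      · rintro ⟨h1, h2⟩
        refine ⟨h1, ?_⟩
        rw [hxdef, inner_add_right, real_inner_smul_right, hpx] at h2
        have e2 : ⟪s, β⟫ + ε0 * ⟪s, v⟫ ≤ pen β + ε0 * c := by
          have hb := h1 (β + ε0 • v)
          rw [inner_add_right, real_inner_smul_right,
            key ε0 (le_of_lt hε0pos) le_rfl] at hb
          linarith
        have e3 : ⟪s, β⟫ ≤ pen β := h1 β
        linarith
      · rintro ⟨h1, h2⟩
        refine ⟨h1, ?_⟩
        have hsv : ⟪s, v⟫ = c := hFv s ((mem_subdiff_iff hpen s β).mpr ⟨h1, h2⟩)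
        rw [hxdef, inner_add_right, real_inner_smul_right, hpx, hsv, h2]
    have hβC : β ∈ C := by show subdiff pen β = subdiff pen β; rfl
    have hsub : x - β ∈ Submodule.span ℝ C :=
      Submodule.sub_mem _ (Submodule.subset_span hxC) (Submodule.subset_span hβC)
    have : (ε0 / 2)⁻¹ • (x - β) ∈ Submodule.span ℝ C := Submodule.smul_mem _ _ hsub
    have hveq : (ε0 / 2)⁻¹ • (x - β) = v := by
      rw [hxdef, add_sub_cancel_left, smul_smul, inv_mul_cancel₀ (by linarith), one_smul]
    rwa [hveq] at this
  have hspaneq : Submodule.span ℝ C = Wᗮ :=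
    le_antisymm (Submodule.span_le.mpr step1) step2
  rw [hspaneq]
  have hsum := Submodule.finrank_add_finrank_orthogonal (𝕜 := ℝ) W
  rw [finrank_euclideanSpace_fin] at hsum
  omega
end
end

section
/- Let X ∈ ℝ^{n×p}, β ∈ ℝ^p, and let pen be a real-valued polyhedral gauge on ℝ^p (pen(b) = max{⟨u_1,b⟩,…,⟨u_k,b⟩} with u_1 = 0). Let μ be a probability measure on ℝ^n that is symmetric, i.e. the pushforward of μ under e ↦ −e equals μ, and assume the set E = {e ∈ ℝ^n : ∃λ > 0, ∃β̂ ∈ S_{X,λpen}(Xβ + e) with ∂pen(β̂) = ∂pen(β)} is μ-measurable. If β does not satisfy the noiseless recovery condition, i.e. there do NOT exist λ > 0 and β̂ ∈ S_{X,λpen}(Xβ) with ∂pen(β̂) = ∂pen(β), then μ(E) ≤ 1/2. -/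
open scoped RealInnerProductSpace

noncomputable section

def ofE {m : ℕ} (v : EuclideanSpace ℝ (Fin m)) : Fin m → ℝ := WithLp.equiv 2 _ v

lemma inner_transpose {n p : ℕ} (X : Matrix (Fin n) (Fin p) ℝ) (z : Fin n → ℝ) (d : Fin p → ℝ) :
    ⟪toEuc (X.transpose.mulVec z), toEuc d⟫ = ⟪toEuc z, toEuc (X.mulVec d)⟫ := by
  simp [toEuc, PiLp.inner_apply, Matrix.mulVec, dotProduct, Finset.sum_mul, Finset.mul_sum]
  rw [Finset.sum_comm]
  apply Finset.sum_congr rfl; intro j _; apply Finset.sum_congr rfl; intro i _; ring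

/-- the candidate subgradient `Xᵀ(y − Xb)/λ` -/
def grad {n p : ℕ} (X : Matrix (Fin n) (Fin p) ℝ) (lam : ℝ)
    (y : EuclideanSpace ℝ (Fin n)) (b : EuclideanSpace ℝ (Fin p)) :
    EuclideanSpace ℝ (Fin p) :=
  lam⁻¹ • toEuc (X.transpose.mulVec (ofE (y - toEuc (X.mulVec (ofE b)))))

lemma inner_grad {n p : ℕ} (X : Matrix (Fin n) (Fin p) ℝ) (lam : ℝ)
    (y : EuclideanSpace ℝ (Fin n)) (b : EuclideanSpace ℝ (Fin p)) (d : Fin p → ℝ) :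
    ⟪grad X lam y b, toEuc d⟫
      = lam⁻¹ * ⟪y - toEuc (X.mulVec (ofE b)), toEuc (X.mulVec d)⟫ := by
  rw [grad, real_inner_smul_left, inner_transpose]
  congr 1

/-- residual decomposition : y - Xb' = (y - Xb) - X(b'-b) -/
lemma resid_decomp {n p : ℕ} (X : Matrix (Fin n) (Fin p) ℝ) (y : EuclideanSpace ℝ (Fin n))
    (b b' : EuclideanSpace ℝ (Fin p)) :
    y - toEuc (X.mulVec (ofE b')) =
      (y - toEuc (X.mulVec (ofE b))) - toEuc (X.mulVec (ofE b' - ofE b)) := by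
  rw [Matrix.mulVec_sub]
  have : toEuc (X.mulVec (ofE b') - X.mulVec (ofE b))
      = toEuc (X.mulVec (ofE b')) - toEuc (X.mulVec (ofE b)) := rfl
  rw [this]; abel

lemma mem_Smin_of_grad_subdiff {n p : ℕ} (X : Matrix (Fin n) (Fin p) ℝ) {lam : ℝ}
    (hl : 0 < lam) (pen : EuclideanSpace ℝ (Fin p) → ℝ)
    (y : EuclideanSpace ℝ (Fin n)) (b : EuclideanSpace ℝ (Fin p))
    (hs : grad X lam y b ∈ subdiff pen b) :
    b ∈ Smin X lam pen y := by
  have main : ∀ b' : EuclideanSpace ℝ (Fin p),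
      (1/2) * ‖y - toEuc (X.mulVec (ofE b))‖^2 + lam * pen b
      ≤ (1/2) * ‖y - toEuc (X.mulVec (ofE b'))‖^2 + lam * pen b' := by
    intro b'
    have key := hs b'
    set r := y - toEuc (X.mulVec (ofE b)) with hr
    set w := toEuc (X.mulVec (ofE b' - ofE b)) with hw
    have hdec : y - toEuc (X.mulVec (ofE b')) = r - w := resid_decomp X y b b'
    have hnorm : ‖r - w‖^2 = ‖r‖^2 - 2 * ⟪r, w⟫ + ‖w‖^2 := norm_sub_sq_real r w
    have hinner : ⟪grad X lam y b, b' - b⟫ = lam⁻¹ * ⟪r, w⟫ := by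
      have h1 : (b' - b : EuclideanSpace ℝ (Fin p)) = toEuc (ofE b' - ofE b) := rfl
      rw [h1, inner_grad]
    rw [hinner] at key
    rw [hdec, hnorm]
    have hmul : lam * (pen b + lam⁻¹ * ⟪r, w⟫) ≤ lam * pen b' :=
      mul_le_mul_of_nonneg_left key hl.le
    have hcanc : lam * (lam⁻¹ * ⟪r, w⟫) = ⟪r, w⟫ := by field_simp
    nlinarith [sq_nonneg ‖w‖]
  intro v'
  exact main v'

lemma grad_subdiff_of_mem_Smin {n p : ℕ} (X : Matrix (Fin n) (Fin p) ℝ) {lam : ℝ}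
    (hl : 0 < lam) (pen : EuclideanSpace ℝ (Fin p) → ℝ)
    (hc : ∀ (a b : EuclideanSpace ℝ (Fin p)) (t : ℝ), 0 ≤ t → t ≤ 1 →
      pen (a + t • (b - a)) ≤ (1 - t) * pen a + t * pen b)
    (y : EuclideanSpace ℝ (Fin n)) (b : EuclideanSpace ℝ (Fin p))
    (hb : b ∈ Smin X lam pen y) :
    grad X lam y b ∈ subdiff pen b := by
  intro b'
  set r := y - toEuc (X.mulVec (ofE b)) with hr
  set w := toEuc (X.mulVec (ofE b' - ofE b)) with hw
  have hinner : ⟪grad X lam y b, b' - b⟫ = lam⁻¹ * ⟪r, w⟫ := by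
    have h1 : (b' - b : EuclideanSpace ℝ (Fin p)) = toEuc (ofE b' - ofE b) := rfl
    rw [h1, inner_grad]
  set A := lam * (pen b' - pen b) - ⟪r, w⟫ with hA
  set B := ‖w‖^2 / 2 with hB
  have hB0 : 0 ≤ B := by positivity
  have hstep : ∀ t : ℝ, 0 < t → t ≤ 1 → 0 ≤ t * A + t^2 * B := by
    intro t ht0 ht1
    have hmin : (1/2) * ‖y - toEuc (X.mulVec (ofE b))‖^2 + lam * pen b
        ≤ (1/2) * ‖y - toEuc (X.mulVec (ofE (b + t • (b' - b))))‖^2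
          + lam * pen (b + t • (b' - b)) := hb (b + t • (b' - b))
    have hXbt : toEuc (X.mulVec (ofE (b + t • (b' - b))))
        = toEuc (X.mulVec (ofE b)) + t • w := by
      have h1 : (ofE (b + t • (b' - b)) : Fin p → ℝ) = ofE b + t • (ofE b' - ofE b) := rfl
      rw [h1, Matrix.mulVec_add, Matrix.mulVec_smul]
      rfl
    have hres : y - toEuc (X.mulVec (ofE (b + t • (b' - b)))) = r - t • w := by
      rw [hXbt, hr]; abel
    have hnorm : ‖r - t • w‖^2 = ‖r‖^2 - 2 * (t * ⟪r, w⟫) + t^2 * ‖w‖^2 := by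
      rw [norm_sub_sq_real, real_inner_smul_right, norm_smul]
      simp [abs_of_pos ht0]
      ring
    have hpent := hc b b' t ht0.le ht1
    rw [hres, hnorm] at hmin
    have hlam := mul_le_mul_of_nonneg_left hpent (le_of_lt hl)
    nlinarith
  have hA0 : 0 ≤ A := by
    by_contra hneg
    push_neg at hneg
    set t := min 1 ((-A) / (2 * (B + 1))) with ht
    have hpos2 : (0:ℝ) < 2 * (B + 1) := by linarith
    have htpos : 0 < t := lt_min one_pos (div_pos (by linarith) hpos2)
    have ht1 : t ≤ 1 := min_le_left _ _
    have htle : t ≤ (-A) / (2 * (B + 1)) := min_le_right _ _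
    have h2 : t * (2 * (B + 1)) ≤ -A := by
      have h := mul_le_mul_of_nonneg_right htle hpos2.le
      rwa [div_mul_cancel₀ _ (ne_of_gt hpos2)] at h
    have hkey := hstep t htpos ht1
    nlinarith [mul_le_mul_of_nonneg_left h2 htpos.le, mul_pos htpos htpos]
  rw [hinner]
  have h3 : lam⁻¹ * ⟪r, w⟫ ≤ pen b' - pen b := by
    rw [inv_mul_le_iff₀ hl]
    linarith
  linarith

lemma subdiff_combo {p : ℕ} (φ : EuclideanSpace ℝ (Fin p) → ℝ) (x : EuclideanSpace ℝ (Fin p))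
    {s₁ s₂ : EuclideanSpace ℝ (Fin p)} (h₁ : s₁ ∈ subdiff φ x) (h₂ : s₂ ∈ subdiff φ x)
    {t : ℝ} (ht0 : 0 ≤ t) (ht1 : t ≤ 1) : t • s₁ + (1 - t) • s₂ ∈ subdiff φ x := by
  intro b
  have a1 := h₁ b
  have a2 := h₂ b
  have hin : ⟪t • s₁ + (1 - t) • s₂, b - x⟫ = t * ⟪s₁, b - x⟫ + (1 - t) * ⟪s₂, b - x⟫ := by
    simp only [inner_add_left, real_inner_smul_left]
  rw [hin]
  nlinarith [mul_le_mul_of_nonneg_left a1 ht0,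
    mul_le_mul_of_nonneg_left a2 (by linarith : (0:ℝ) ≤ 1 - t)]

lemma subdiff_midpoint {p : ℕ} (φ : EuclideanSpace ℝ (Fin p) → ℝ)
    (x y : EuclideanSpace ℝ (Fin p))
    (hconv : φ ((2:ℝ)⁻¹ • (x + y)) ≤ (φ x + φ y) / 2)
    (h : subdiff φ x = subdiff φ y) {s : EuclideanSpace ℝ (Fin p)} (hs : s ∈ subdiff φ x) :
    subdiff φ ((2:ℝ)⁻¹ • (x + y)) = subdiff φ x := by
  set m : EuclideanSpace ℝ (Fin p) := (2:ℝ)⁻¹ • (x + y) with hm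
  have hsy : s ∈ subdiff φ y := h ▸ hs
  have hxm : x - m = -(y - m) := by
    rw [hm]; ext i; simp [PiLp.sub_apply, PiLp.smul_apply, PiLp.add_apply, PiLp.neg_apply]; ring
  have hsum0 : ∀ s' : EuclideanSpace ℝ (Fin p), ⟪s', m - x⟫ + ⟪s', m - y⟫ = 0 := by
    intro s'
    have : m - x = -(m - y) := by
      rw [hm]; ext i; simp [PiLp.sub_apply, PiLp.smul_apply, PiLp.add_apply, PiLp.neg_apply]; ring
    rw [this, inner_neg_right]; ring
  have hmid : φ m = (φ x + φ y) / 2 := by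
    have b1 := hs m
    have b2 := hsy m
    have := hsum0 s
    linarith
  have hhalf : ∀ b, ⟪s, b - m⟫ = (⟪s, b - x⟫ + ⟪s, b - y⟫) / 2 := by
    intro b
    have h2 : (b - x) + (b - y) = (2:ℝ) • (b - m) := by
      rw [hm]; ext i; simp [PiLp.sub_apply, PiLp.smul_apply, PiLp.add_apply]; ring
    have := congrArg (fun v => ⟪s, v⟫) h2
    simp only [inner_add_right, real_inner_smul_right] at this
    linarith
  ext s'
  constructor
  · intro hs' b
    have a1 := hs' x
    have a2 := hs' y
    -- ⟪s', x - m⟫ = (φ x - φ y)/2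
    have e1 : ⟪s', x - m⟫ ≤ (φ x - φ y) / 2 := by rw [hmid] at a1; linarith
    have e2 : ⟪s', y - m⟫ ≤ (φ y - φ x) / 2 := by rw [hmid] at a2; linarith
    have e3 : ⟪s', x - m⟫ + ⟪s', y - m⟫ = 0 := by
      have := hsum0 s'
      have h1 : ⟪s', m - x⟫ = -⟪s', x - m⟫ := by rw [← inner_neg_right]; congr 1; abel
      have h2 : ⟪s', m - y⟫ = -⟪s', y - m⟫ := by rw [← inner_neg_right]; congr 1; abel
      linarith
    have e4 : ⟪s', x - m⟫ = (φ x - φ y) / 2 := by linarith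
    have key := hs' b
    have h5 : ⟪s', b - x⟫ = ⟪s', b - m⟫ - ⟪s', x - m⟫ := by
      rw [← inner_sub_right]; congr 1; abel
    rw [h5, e4]; linarith [key, hmid]
  · intro hs' b
    have hs'y : s' ∈ subdiff φ y := h ▸ hs'
    have a1 := hs' b
    have a2 := hs'y b
    have := hhalf s  -- unused
    have h5 : ⟪s', b - m⟫ = (⟪s', b - x⟫ + ⟪s', b - y⟫) / 2 := by
      have h2 : (b - x) + (b - y) = (2:ℝ) • (b - m) := by
        rw [hm]; ext i; simp [PiLp.sub_apply, PiLp.smul_apply, PiLp.add_apply]; ring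
      have := congrArg (fun v => ⟪s', v⟫) h2
      simp only [inner_add_right, real_inner_smul_right] at this
      linarith
    rw [hmid, h5]; linarith

lemma pen_convex_aux {p k : ℕ} (u : Fin (k + 1) → EuclideanSpace ℝ (Fin p))
    (pen : EuclideanSpace ℝ (Fin p) → ℝ)
    (hpen : ∀ x, pen x = Finset.univ.sup' Finset.univ_nonempty fun i => ⟪u i, x⟫) :
    ∀ (a b : EuclideanSpace ℝ (Fin p)) (t : ℝ), 0 ≤ t → t ≤ 1 →
      pen (a + t • (b - a)) ≤ (1 - t) * pen a + t * pen b := by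
  intro a b t ht0 ht1
  rw [hpen]
  apply Finset.sup'_le
  intro i _
  have hi : ⟪u i, a + t • (b - a)⟫ = (1 - t) * ⟪u i, a⟫ + t * ⟪u i, b⟫ := by
    rw [inner_add_right, real_inner_smul_right, inner_sub_right]; ring
  rw [hi]
  have ha : ⟪u i, a⟫ ≤ pen a := by
    rw [hpen]; exact Finset.le_sup' (fun j => ⟪u j, a⟫) (Finset.mem_univ i)
  have hb : ⟪u i, b⟫ ≤ pen b := by
    rw [hpen]; exact Finset.le_sup' (fun j => ⟪u j, b⟫) (Finset.mem_univ i)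
  nlinarith

open MeasureTheory in
/-- If the noiseless recovery condition fails for `β`, then for any symmetric
probability distribution of the noise, the probability that some point on the solution path
has the same pattern as `β` is at most `1/2`. -/
theorem noiseless_recovery_necessary {n p k : ℕ}
    (X : Matrix (Fin n) (Fin p) ℝ)
    (u : Fin (k + 1) → EuclideanSpace ℝ (Fin p)) (hu : u 0 = 0)
    (pen : EuclideanSpace ℝ (Fin p) → ℝ)
    (hpen : ∀ x, pen x = Finset.univ.sup' Finset.univ_nonempty fun i => ⟪u i, x⟫)
    (β : EuclideanSpace ℝ (Fin p))
    (μ : Measure (EuclideanSpace ℝ (Fin n))) [IsProbabilityMeasure μ]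
    (hsymm : μ.map (fun e => -e) = μ)
    (hmeas : MeasurableSet {e : EuclideanSpace ℝ (Fin n) | ∃ lam > 0,
        ∃ βh ∈ Smin X lam pen (toEuc (X.mulVec β) + e), subdiff pen βh = subdiff pen β})
    (hnrc : ¬ ∃ lam > 0, ∃ βh ∈ Smin X lam pen (toEuc (X.mulVec β)),
        subdiff pen βh = subdiff pen β) :
    μ {e : EuclideanSpace ℝ (Fin n) | ∃ lam > 0,
        ∃ βh ∈ Smin X lam pen (toEuc (X.mulVec β) + e), subdiff pen βh = subdiff pen β}
      ≤ 1 / 2 := by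
  have hc := pen_convex_aux u pen hpen
  set y : EuclideanSpace ℝ (Fin n) := toEuc (X.mulVec β) with hy
  set Ev : Set (EuclideanSpace ℝ (Fin n)) := {e | ∃ lam > 0,
      ∃ βh ∈ Smin X lam pen (y + e), subdiff pen βh = subdiff pen β} with hEv
  -- core disjointness claim
  have core : ∀ e : EuclideanSpace ℝ (Fin n), e ∈ Ev → (-e) ∈ Ev → False := by
    intro e he hne
    obtain ⟨lam₁, hlam₁, β₁, hS₁, hsub₁⟩ := he
    obtain ⟨lam₂, hlam₂, β₂, hS₂, hsub₂⟩ := hne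
    have hs₁ : grad X lam₁ (y + e) β₁ ∈ subdiff pen β₁ :=
      grad_subdiff_of_mem_Smin X hlam₁ pen hc (y + e) β₁ hS₁
    have hs₂ : grad X lam₂ (y + -e) β₂ ∈ subdiff pen β₂ :=
      grad_subdiff_of_mem_Smin X hlam₂ pen hc (y + -e) β₂ hS₂
    set s₁ := grad X lam₁ (y + e) β₁ with hs1d
    set s₂ := grad X lam₂ (y + -e) β₂ with hs2d
    have hsum : 0 < lam₁ + lam₂ := by linarith
    set t : ℝ := lam₁ / (lam₁ + lam₂) with htdef
    have ht0 : 0 ≤ t := div_nonneg hlam₁.le hsum.le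
    have ht1 : t ≤ 1 := by
      rw [htdef, div_le_one hsum]; linarith
    have hs₁β : s₁ ∈ subdiff pen β := hsub₁ ▸ hs₁
    have hs₂β : s₂ ∈ subdiff pen β := hsub₂ ▸ hs₂
    have hsβ : t • s₁ + (1 - t) • s₂ ∈ subdiff pen β :=
      subdiff_combo pen β hs₁β hs₂β ht0 ht1
    set m : EuclideanSpace ℝ (Fin p) := (2:ℝ)⁻¹ • (β₁ + β₂) with hmdef
    set lam' : ℝ := (lam₁ + lam₂) / 2 with hlam'def
    have hlam' : 0 < lam' := by rw [hlam'def]; linarith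
    -- subdiff pen m = subdiff pen β
    have hconvm : pen ((2:ℝ)⁻¹ • (β₁ + β₂)) ≤ (pen β₁ + pen β₂) / 2 := by
      have hmm : β₁ + (2:ℝ)⁻¹ • (β₂ - β₁) = (2:ℝ)⁻¹ • (β₁ + β₂) := by
        ext i
        simp [PiLp.add_apply, PiLp.smul_apply, PiLp.sub_apply]
        ring
      have := hc β₁ β₂ (2:ℝ)⁻¹ (by norm_num) (by norm_num)
      rw [hmm] at this
      linarith
    have h12 : subdiff pen β₁ = subdiff pen β₂ := hsub₁.trans hsub₂.symm
    have hmsub : subdiff pen m = subdiff pen β :=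
      (subdiff_midpoint pen β₁ β₂ hconvm h12 hs₁).trans hsub₁
    -- the combination equals grad X lam' y m
    have halg : t • s₁ + (1 - t) • s₂ = grad X lam' y m := by
      rw [hs1d, hs2d, grad, grad, grad]
      set v₁ : Fin n → ℝ := ofE ((y + e) - toEuc (X.mulVec (ofE β₁))) with hv1
      set v₂ : Fin n → ℝ := ofE ((y + -e) - toEuc (X.mulVec (ofE β₂))) with hv2
      set v : Fin n → ℝ := ofE (y - toEuc (X.mulVec (ofE m))) with hv
      have e₁ : t • (lam₁⁻¹ • toEuc (X.transpose.mulVec v₁))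
          = toEuc (X.transpose.mulVec ((t * lam₁⁻¹) • v₁)) := by
        rw [smul_smul, Matrix.mulVec_smul]; rfl
      have e₂ : (1 - t) • (lam₂⁻¹ • toEuc (X.transpose.mulVec v₂))
          = toEuc (X.transpose.mulVec (((1 - t) * lam₂⁻¹) • v₂)) := by
        rw [smul_smul, Matrix.mulVec_smul]; rfl
      have e₃ : lam'⁻¹ • toEuc (X.transpose.mulVec v)
          = toEuc (X.transpose.mulVec (lam'⁻¹ • v)) := by
        rw [Matrix.mulVec_smul]; rfl
      rw [e₁, e₂, e₃]
      have e₄ : toEuc (X.transpose.mulVec ((t * lam₁⁻¹) • v₁))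
            + toEuc (X.transpose.mulVec (((1 - t) * lam₂⁻¹) • v₂))
          = toEuc (X.transpose.mulVec ((t * lam₁⁻¹) • v₁ + ((1 - t) * lam₂⁻¹) • v₂)) := by
        rw [Matrix.mulVec_add]; rfl
      rw [e₄]
      refine congrArg toEuc (congrArg X.transpose.mulVec ?_)
      -- vector identity in `Fin n → ℝ`
      have hXm : X.mulVec (ofE m) = (2:ℝ)⁻¹ • (X.mulVec (ofE β₁) + X.mulVec (ofE β₂)) := by
        have h1 : (ofE m : Fin p → ℝ) = (2:ℝ)⁻¹ • (ofE β₁ + ofE β₂) := rfl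
        rw [h1, Matrix.mulVec_smul, Matrix.mulVec_add]
      funext j
      have hvj : v j = y j - (X.mulVec (ofE m)) j := rfl
      have hv1j : v₁ j = y j + e j - (X.mulVec (ofE β₁)) j := rfl
      have hv2j : v₂ j = y j + -(e j) - (X.mulVec (ofE β₂)) j := rfl
      have hXmj : (X.mulVec (ofE m)) j
          = 2⁻¹ * ((X.mulVec (ofE β₁)) j + (X.mulVec (ofE β₂)) j) := by
        rw [hXm]; rfl
      show (t * lam₁⁻¹) * v₁ j + ((1 - t) * lam₂⁻¹) * v₂ j = lam'⁻¹ * v j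
      rw [hvj, hv1j, hv2j, hXmj, htdef, hlam'def]
      field_simp
      ring
    have hgrad : grad X lam' y m ∈ subdiff pen m := by
      rw [hmsub, ← halg]; exact hsβ
    have hmS : m ∈ Smin X lam' pen y :=
      mem_Smin_of_grad_subdiff X hlam' pen y m hgrad
    exact hnrc ⟨lam', hlam', m, hmS, hmsub⟩
  -- measure-theoretic part
  have hpre : MeasurableSet ((fun e : EuclideanSpace ℝ (Fin n) => -e) ⁻¹' Ev) :=
    hmeas.preimage measurable_neg
  have hmapeq : μ ((fun e : EuclideanSpace ℝ (Fin n) => -e) ⁻¹' Ev) = μ Ev := by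
    conv_rhs => rw [← hsymm]
    rw [Measure.map_apply measurable_neg hmeas]
  have hdisj : Disjoint Ev ((fun e : EuclideanSpace ℝ (Fin n) => -e) ⁻¹' Ev) := by
    rw [Set.disjoint_left]
    intro e he hne
    exact core e he hne
  have hle1 : μ Ev + μ Ev ≤ 1 := by
    calc μ Ev + μ Ev = μ Ev + μ ((fun e : EuclideanSpace ℝ (Fin n) => -e) ⁻¹' Ev) := by
          rw [hmapeq]
      _ = μ (Ev ∪ (fun e : EuclideanSpace ℝ (Fin n) => -e) ⁻¹' Ev) :=
          (measure_union hdisj hpre).symm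
      _ ≤ μ Set.univ := measure_mono (Set.subset_univ _)
      _ = 1 := measure_univ
  by_contra hgt
  push_neg at hgt
  have : (1:ENNReal) < μ Ev + μ Ev := by
    calc (1:ENNReal) = 1/2 + 1/2 := (ENNReal.add_halves 1).symm
      _ < μ Ev + μ Ev := ENNReal.add_lt_add hgt hgt
  exact absurd hle1 (not_le.mpr this)
end
end

section
/- Let pen be a real-valued polyhedral gauge on ℝ^p (pen(b) = max{⟨u_1,b⟩,…,⟨u_k,b⟩} with u_1 = 0), let X ∈ ℝ^{n×p} and λ > 0. Then S_{X,λpen}(y) is a singleton for every y ∈ ℝ^n if and only if every β ∈ ℝ^p with row(X) ∩ ∂pen(β) ≠ ∅ (i.e. every β with accessible pattern) has pattern complexity at most rank(X), i.e. the dimension of the linear span of C_β is at most rank(X). -/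
open scoped RealInnerProductSpace

noncomputable section

open scoped Classical


lemma argmax_nonempty {ι : Type*} (S : Finset ι) (hS : S.Nonempty) (v : ι → ℝ) :
    (S.filter fun i => v i = S.sup' hS v).Nonempty := by
  obtain ⟨i, hi, h⟩ := Finset.exists_mem_eq_sup' hS v
  exact ⟨i, Finset.mem_filter.2 ⟨hi, h.symm⟩⟩

lemma gap {ι : Type*} (S : Finset ι) (hS : S.Nonempty) (v w : ι → ℝ) :
    ∃ δ₀ > 0, ∀ δ : ℝ, 0 < δ → δ < δ₀ →
      ((S.sup' hS fun i => v i + δ * w i) = S.sup' hS v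
          + δ * ((S.filter fun i => v i = S.sup' hS v).sup' (argmax_nonempty S hS v) w))
      ∧ ((S.filter fun i => v i + δ * w i = S.sup' hS fun i => v i + δ * w i)
        = ((S.filter fun i => v i = S.sup' hS v).filter fun i =>
            w i = (S.filter fun i => v i = S.sup' hS v).sup' (argmax_nonempty S hS v) w)) := by
  set V := S.sup' hS v with hV
  set A := S.filter fun i => v i = V with hA
  have hAne : A.Nonempty := argmax_nonempty S hS v
  set M := A.sup' hAne w with hM
  set B : ℝ := S.sup' hS fun i => |w i| with hB
  have habsB : ∀ i ∈ S, |w i| ≤ B := by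
    intro i hi
    rw [hB]
    exact Finset.le_sup' (fun i => |w i|) hi
  have hB0 : 0 ≤ B := by
    obtain ⟨i, hi⟩ := hS
    exact le_trans (abs_nonneg (w i)) (habsB i hi)
  have hMB : |M| ≤ B := by
    obtain ⟨i, hi, h⟩ := Finset.exists_mem_eq_sup' hAne w
    rw [hM, h]
    exact habsB i (Finset.mem_of_mem_filter i hi)
  -- gap γ
  set g : ℝ := if h : (S \ A).Nonempty then V - (S \ A).sup' h v else 1 with hg
  have hglt : ∀ i ∈ S, i ∉ A → v i ≤ V - g := by
    intro i hi hiA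
    have hne : (S \ A).Nonempty := ⟨i, Finset.mem_sdiff.2 ⟨hi, hiA⟩⟩
    rw [hg, dif_pos hne]
    have : v i ≤ (S \ A).sup' hne v := Finset.le_sup' _ (Finset.mem_sdiff.2 ⟨hi, hiA⟩)
    linarith
  have hg0 : 0 < g := by
    rw [hg]
    split_ifs with h
    · have : (S \ A).sup' h v < V := by
        rw [Finset.sup'_lt_iff]
        intro i hi
        rcases Finset.mem_sdiff.1 hi with ⟨hiS, hiA⟩
        rcases lt_or_eq_of_le (Finset.le_sup' v hiS : v i ≤ V) with h' | h'
        · exact h'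
        · exact absurd (Finset.mem_filter.2 ⟨hiS, h'⟩) hiA
      linarith
    · norm_num
  refine ⟨g / (2 * B + 1), by positivity, fun δ hδ0 hδ => ?_⟩
  have hkey : ∀ i ∈ S, i ∉ A → v i + δ * w i < V + δ * M := by
    intro i hi hiA
    have h1 : v i ≤ V - g := hglt i hi hiA
    have h2 : δ * w i ≤ δ * B := by
      have := (abs_le.1 (habsB i hi)).2
      nlinarith
    have h3 : -(δ * B) ≤ δ * M := by
      have := (abs_le.1 hMB).1
      nlinarith
    have h4 : δ * (2 * B + 1) < g := by
      have h5 := (lt_div_iff₀ (by positivity : (0:ℝ) < 2 * B + 1)).1 hδ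
      nlinarith [hδ]
    nlinarith
  have hAval : ∀ i ∈ A, v i = V := fun i hi => (Finset.mem_filter.1 hi).2
  have hwM : ∀ i ∈ A, w i ≤ M := fun i hi => Finset.le_sup' _ hi
  obtain ⟨i₀, hi₀A, hi₀⟩ := Finset.exists_mem_eq_sup' hAne w
  have hi₀S : i₀ ∈ S := Finset.mem_of_mem_filter i₀ hi₀A
  have hsup : (S.sup' hS fun i => v i + δ * w i) = V + δ * M := by
    apply le_antisymm
    · rw [Finset.sup'_le_iff]
      intro i hi
      by_cases hiA : i ∈ A
      · have := hwM i hiA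
        have := hAval i hiA
        nlinarith
      · exact le_of_lt (hkey i hi hiA)
    · have : v i₀ + δ * w i₀ = V + δ * M := by rw [hAval i₀ hi₀A, ← hi₀]
      rw [← this]
      exact Finset.le_sup' (fun i => v i + δ * w i) hi₀S
  refine ⟨hsup, ?_⟩
  ext i
  simp only [Finset.mem_filter, hsup]
  constructor
  · rintro ⟨hiS, heq⟩
    by_cases hiA : i ∈ A
    · have hv := hAval i hiA
      have : w i = M := by
        have : δ * w i = δ * M := by linarith
        exact mul_left_cancel₀ (ne_of_gt hδ0) this
      exact ⟨⟨hiS, hv⟩, this⟩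
    · exact absurd heq (ne_of_lt (hkey i hiS hiA))
  · rintro ⟨⟨hiS, hv⟩, hw⟩
    refine ⟨hiS, by rw [hv, hw]⟩


section PenBasics
variable {p k : ℕ}

/-- canonical polyhedral gauge -/
def penF (u : Fin (k+1) → EuclideanSpace ℝ (Fin p)) (x : EuclideanSpace ℝ (Fin p)) : ℝ :=
  Finset.univ.sup' Finset.univ_nonempty fun i => ⟪u i, x⟫

variable (u : Fin (k+1) → EuclideanSpace ℝ (Fin p))

lemma le_penF (i : Fin (k+1)) (x : EuclideanSpace ℝ (Fin p)) : ⟪u i, x⟫ ≤ penF u x :=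
  Finset.le_sup' (fun i => ⟪u i, x⟫) (Finset.mem_univ i)

lemma penF_le {x : EuclideanSpace ℝ (Fin p)} {c : ℝ} (h : ∀ i, ⟪u i, x⟫ ≤ c) :
    penF u x ≤ c :=
  Finset.sup'_le _ _ fun i _ => h i

/-- argmax index set -/
def ISet (x : EuclideanSpace ℝ (Fin p)) : Finset (Fin (k+1)) :=
  Finset.univ.filter fun i => ⟪u i, x⟫ = penF u x

lemma mem_ISet {x : EuclideanSpace ℝ (Fin p)} {i : Fin (k+1)} :
    i ∈ ISet u x ↔ ⟪u i, x⟫ = penF u x := by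
  simp [ISet]

lemma ISet_nonempty (x : EuclideanSpace ℝ (Fin p)) : (ISet u x).Nonempty := by
  obtain ⟨i, _, h⟩ := Finset.exists_mem_eq_sup' (Finset.univ_nonempty) fun i => ⟪u i, x⟫
  exact ⟨i, (mem_ISet u).2 h.symm⟩

lemma penF_zero : penF u (0 : EuclideanSpace ℝ (Fin p)) = 0 := by
  have h1 : penF u 0 ≤ 0 := penF_le u fun i => by simp
  have h2 : (0:ℝ) ≤ penF u 0 := by
    obtain ⟨i⟩ := ISet_nonempty u 0
    have := le_penF u 0 0
    simpa using le_penF u 0 (0 : EuclideanSpace ℝ (Fin p))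
  linarith

lemma penF_nonneg (hu : u 0 = 0) (x : EuclideanSpace ℝ (Fin p)) : 0 ≤ penF u x := by
  have := le_penF u 0 x
  rwa [hu, inner_zero_left] at this

lemma penF_convex {a b : ℝ} (ha : 0 ≤ a) (hb : 0 ≤ b) (x y : EuclideanSpace ℝ (Fin p)) :
    penF u (a • x + b • y) ≤ a * penF u x + b * penF u y := by
  apply penF_le
  intro i
  rw [inner_add_right, real_inner_smul_right, real_inner_smul_right]
  have h1 : ⟪u i, x⟫ ≤ penF u x := le_penF u i x
  have h2 : ⟪u i, y⟫ ≤ penF u y := le_penF u i y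
  nlinarith

lemma penF_smul {t : ℝ} (ht : 0 < t) (x : EuclideanSpace ℝ (Fin p)) :
    penF u (t • x) = t * penF u x := by
  apply le_antisymm
  · apply penF_le
    intro i
    rw [real_inner_smul_right]
    exact mul_le_mul_of_nonneg_left (le_penF u i x) ht.le
  · obtain ⟨i, hi⟩ := ISet_nonempty u x
    rw [mem_ISet] at hi
    calc t * penF u x = ⟪u i, t • x⟫ := by rw [real_inner_smul_right, hi]
    _ ≤ penF u (t • x) := le_penF u i _

lemma penF_lipschitz_bound (x y : EuclideanSpace ℝ (Fin p)) :
    penF u x ≤ penF u y + (Finset.univ.sup' Finset.univ_nonempty fun i => ‖u i‖) * ‖x - y‖ := by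
  apply penF_le
  intro i
  have h1 : ⟪u i, x⟫ - ⟪u i, y⟫ = ⟪u i, x - y⟫ := (inner_sub_right _ _ _).symm
  have h2 : ⟪u i, x - y⟫ ≤ ‖u i‖ * ‖x - y‖ := real_inner_le_norm _ _
  have h3 : ‖u i‖ ≤ Finset.univ.sup' Finset.univ_nonempty fun i => ‖u i‖ :=
    Finset.le_sup' (fun i => ‖u i‖) (Finset.mem_univ i)
  have h4 : ⟪u i, y⟫ ≤ penF u y := le_penF u i y
  nlinarith [norm_nonneg (x - y)]

lemma penF_continuous : Continuous (penF u) := by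
  set M := Finset.univ.sup' Finset.univ_nonempty fun i => ‖u i‖ with hM
  have hM0 : 0 ≤ M := le_trans (norm_nonneg (u 0)) (Finset.le_sup' (fun i => ‖u i‖) (Finset.mem_univ 0))
  have : LipschitzWith (Real.toNNReal M) (penF u) := by
    apply LipschitzWith.of_dist_le_mul
    intro x y
    rw [Real.dist_eq, Real.coe_toNNReal _ hM0]
    rw [abs_sub_le_iff]
    constructor
    · have := penF_lipschitz_bound u x y
      rw [← dist_eq_norm] at this
      linarith
    · have := penF_lipschitz_bound u y x
      rw [← dist_eq_norm, dist_comm] at this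
      linarith
  exact this.continuous

/-- perturbation of argmax: pen value and index set for small positive δ -/
lemma penF_gap (x c : EuclideanSpace ℝ (Fin p)) :
    ∃ δ₀ > 0, ∀ δ : ℝ, 0 < δ → δ < δ₀ →
      penF u (x + δ • c)
          = penF u x + δ * ((ISet u x).sup' (ISet_nonempty u x) fun i => ⟪u i, c⟫)
      ∧ ISet u (x + δ • c)
          = (ISet u x).filter fun i =>
              ⟪u i, c⟫ = (ISet u x).sup' (ISet_nonempty u x) fun i => ⟪u i, c⟫ := by
  obtain ⟨δ₀, hδ₀, h⟩ := gap Finset.univ Finset.univ_nonempty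
    (fun i => ⟪u i, x⟫) (fun i => ⟪u i, c⟫)
  refine ⟨δ₀, hδ₀, fun δ h0 h1 => ?_⟩
  obtain ⟨hsup, hfilt⟩ := h δ h0 h1
  have hfun : (fun i => ⟪u i, x + δ • c⟫) = fun i => ⟪u i, x⟫ + δ * ⟪u i, c⟫ := by
    funext i
    rw [inner_add_right, real_inner_smul_right]
  have hpen : penF u (x + δ • c) = Finset.univ.sup' Finset.univ_nonempty
      (fun i => ⟪u i, x⟫ + δ * ⟪u i, c⟫) := by
    rw [penF, hfun]
  have hIx : ISet u x = Finset.univ.filter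
      (fun i => ⟪u i, x⟫ = Finset.univ.sup' Finset.univ_nonempty fun i => ⟪u i, x⟫) := rfl
  constructor
  · rw [hpen, hsup]
    congr 1
  · have e1 : ISet u (x + δ • c) = Finset.filter
        (fun i => ⟪u i, x⟫ + δ * ⟪u i, c⟫
          = Finset.univ.sup' Finset.univ_nonempty fun i => ⟪u i, x⟫ + δ * ⟪u i, c⟫)
        Finset.univ := by
      rw [ISet, hpen]
      apply Finset.filter_congr
      intro i _
      rw [inner_add_right, real_inner_smul_right]
    rw [e1, hfilt]
    rfl

section Subdiff
variable {p k : ℕ} (u : Fin (k+1) → EuclideanSpace ℝ (Fin p))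

lemma subdiff_char {x s : EuclideanSpace ℝ (Fin p)} :
    s ∈ subdiff (penF u) x ↔ (∀ b, ⟪s, b⟫ ≤ penF u b) ∧ ⟪s, x⟫ = penF u x := by
  constructor
  · intro h
    have h2 : penF u x + ⟪s, (2:ℝ) • x - x⟫ ≤ penF u ((2:ℝ) • x) := h _
    have h0 : penF u x + ⟪s, 0 - x⟫ ≤ penF u 0 := h 0
    rw [penF_smul u (by norm_num : (0:ℝ) < 2)] at h2
    have hxx : (2:ℝ) • x - x = x := by
      rw [two_smul]; abel
    rw [hxx] at h2
    rw [zero_sub, inner_neg_right, penF_zero] at h0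
    have heq : ⟪s, x⟫ = penF u x := by linarith
    refine ⟨fun b => ?_, heq⟩
    have hb := h b
    have : ⟪s, b - x⟫ = ⟪s, b⟫ - ⟪s, x⟫ := inner_sub_right _ _ _
    linarith
  · rintro ⟨hb, hx⟩
    intro b
    have : ⟪s, b - x⟫ = ⟪s, b⟫ - ⟪s, x⟫ := inner_sub_right _ _ _
    have := hb b
    linarith

lemma u_mem_subdiff {x : EuclideanSpace ℝ (Fin p)} {i : Fin (k+1)} :
    u i ∈ subdiff (penF u) x ↔ i ∈ ISet u x := by
  rw [subdiff_char, mem_ISet]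
  exact ⟨fun h => h.2, fun h => ⟨fun b => le_penF u i b, h⟩⟩

lemma subdiff_convex (x : EuclideanSpace ℝ (Fin p)) : Convex ℝ (subdiff (penF u) x) := by
  intro s1 h1 s2 h2 a b ha hb hab
  rw [subdiff_char] at h1 h2 ⊢
  constructor
  · intro b'
    rw [inner_add_left, real_inner_smul_left, real_inner_smul_left]
    have e1 := mul_le_mul_of_nonneg_left (h1.1 b') ha
    have e2 := mul_le_mul_of_nonneg_left (h2.1 b') hb
    have e3 : a * penF u b' + b * penF u b' = penF u b' := by
      rw [← add_mul, hab, one_mul]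
    linarith
  · rw [inner_add_left, real_inner_smul_left, real_inner_smul_left, h1.2, h2.2]
    linear_combination (penF u x) * hab

lemma subdiff_eq_convexHull (x : EuclideanSpace ℝ (Fin p)) :
    subdiff (penF u) x = convexHull ℝ (u '' (ISet u x : Set (Fin (k+1)))) := by
  apply Set.Subset.antisymm
  · intro s hs
    by_contra hK
    set K := convexHull ℝ (u '' (ISet u x : Set (Fin (k+1)))) with hKdef
    have hKconv : Convex ℝ K := convex_convexHull ℝ _
    have hKcl : IsClosed K :=
      (Set.Finite.isCompact_convexHull ℝ (Set.toFinite _)).isClosed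
    obtain ⟨f, t, hft, hts⟩ := geometric_hahn_banach_closed_point hKconv hKcl hK
    set h := (InnerProductSpace.toDual ℝ (EuclideanSpace ℝ (Fin p))).symm f with hh
    have hfh : ∀ y, ⟪h, y⟫ = f y := fun y => InnerProductSpace.toDual_symm_apply
    obtain ⟨δ₀, hδ₀, hgap⟩ := penF_gap u x h
    set M := (ISet u x).sup' (ISet_nonempty u x) fun i => ⟪u i, h⟫ with hM
    have hMt : M < t := by
      obtain ⟨i, hiI, hieq⟩ := Finset.exists_mem_eq_sup' (ISet_nonempty u x) fun i => ⟪u i, h⟫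
      rw [hM, hieq, real_inner_comm, hfh]
      exact hft (u i) (subset_convexHull ℝ _ (Set.mem_image_of_mem u (by exact_mod_cast hiI)))
    have hsh : t < ⟪s, h⟫ := by rw [real_inner_comm, hfh]; exact hts
    obtain ⟨hpen, -⟩ := hgap (δ₀/2) (by linarith) (by linarith)
    rw [subdiff_char] at hs
    have hle := hs.1 (x + (δ₀/2) • h)
    rw [inner_add_right, real_inner_smul_right, hpen] at hle
    have h2 : ⟪s, x⟫ = penF u x := hs.2
    nlinarith [hδ₀, hsh, hMt]
  · apply convexHull_min
    · rintro s ⟨i, hi, rfl⟩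
      exact (u_mem_subdiff u).2 (by exact_mod_cast hi)
    · exact subdiff_convex u x

lemma subdiff_eq_iff_ISet_eq {x y : EuclideanSpace ℝ (Fin p)} :
    subdiff (penF u) x = subdiff (penF u) y ↔ ISet u x = ISet u y := by
  constructor
  · intro h
    ext i
    rw [← u_mem_subdiff, ← u_mem_subdiff, h]
  · intro h
    rw [subdiff_eq_convexHull, subdiff_eq_convexHull, h]

end Subdiff

section PatternClass
variable {p k : ℕ} (u : Fin (k+1) → EuclideanSpace ℝ (Fin p))

lemma ISet_smul {t : ℝ} (ht : 0 < t) (x : EuclideanSpace ℝ (Fin p)) :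
    ISet u (t • x) = ISet u x := by
  ext i
  rw [mem_ISet, mem_ISet, penF_smul u ht, real_inner_smul_right]
  constructor
  · intro h; exact mul_left_cancel₀ (ne_of_gt ht) h
  · intro h; rw [h]

lemma ISet_add {x y : EuclideanSpace ℝ (Fin p)} (h : ISet u x = ISet u y) :
    ISet u (x + y) = ISet u x := by
  obtain ⟨i₀, hi₀⟩ := ISet_nonempty u x
  have hi₀y : i₀ ∈ ISet u y := h ▸ hi₀
  rw [mem_ISet] at hi₀
  rw [mem_ISet] at hi₀y
  have hpen : penF u (x + y) = penF u x + penF u y := by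
    apply le_antisymm
    · apply penF_le
      intro i
      rw [inner_add_right]
      exact add_le_add (le_penF u i x) (le_penF u i y)
    · calc penF u x + penF u y = ⟪u i₀, x + y⟫ := by rw [inner_add_right, hi₀, hi₀y]
      _ ≤ penF u (x + y) := le_penF u i₀ _
  ext i
  rw [mem_ISet, mem_ISet, hpen, inner_add_right]
  constructor
  · intro heq
    have h1 : ⟪u i, x⟫ ≤ penF u x := le_penF u i x
    have h2 : ⟪u i, y⟫ ≤ penF u y := le_penF u i y
    have hx : ⟪u i, x⟫ = penF u x := by linarith
    exact hx
  · intro hx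
    have hy : i ∈ ISet u y := h ▸ ((mem_ISet u).2 hx)
    rw [mem_ISet] at hy
    rw [hx, hy]

/-- every element of the span of a pattern class is a difference of two class members -/
lemma span_class_diff (β : EuclideanSpace ℝ (Fin p))
    {d : EuclideanSpace ℝ (Fin p)}
    (hd : d ∈ Submodule.span ℝ {x | subdiff (penF u) x = subdiff (penF u) β}) :
    ∃ c1 c2 : EuclideanSpace ℝ (Fin p), subdiff (penF u) c1 = subdiff (penF u) β ∧
      subdiff (penF u) c2 = subdiff (penF u) β ∧ d = c1 - c2 := by
  set C : Set (EuclideanSpace ℝ (Fin p)) := {x | ISet u x = ISet u β} with hC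
  have hCsub : {x | subdiff (penF u) x = subdiff (penF u) β} = C := by
    ext x; exact subdiff_eq_iff_ISet_eq u
  have hmemC : ∀ x ∈ C, ∀ y ∈ C, x + y ∈ C := by
    intro x hx y hy
    have hxy : ISet u x = ISet u y := by rw [hx, hy]
    have := ISet_add u hxy
    simp only [hC, Set.mem_setOf_eq] at hx hy ⊢
    rw [this, hx]
  have hsmulC : ∀ (t : ℝ), 0 < t → ∀ x ∈ C, t • x ∈ C := by
    intro t ht x hx
    simp only [hC, Set.mem_setOf_eq] at hx ⊢
    rw [ISet_smul u ht, hx]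
  have hβC : β ∈ C := by simp [hC]
  set S : Submodule ℝ (EuclideanSpace ℝ (Fin p)) :=
    { carrier := {d | ∃ c1 ∈ C, ∃ c2 ∈ C, d = c1 - c2}
      add_mem' := by
        rintro a b ⟨a1, ha1, a2, ha2, rfl⟩ ⟨b1, hb1, b2, hb2, rfl⟩
        exact ⟨a1 + b1, hmemC _ ha1 _ hb1, a2 + b2, hmemC _ ha2 _ hb2, by abel⟩
      zero_mem' := ⟨β, hβC, β, hβC, by abel⟩
      smul_mem' := by
        rintro t a ⟨a1, ha1, a2, ha2, rfl⟩
        rcases lt_trichotomy t 0 with ht | ht | ht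
        · refine ⟨(-t) • a2, hsmulC _ (by linarith) _ ha2,
            (-t) • a1, hsmulC _ (by linarith) _ ha1, ?_⟩
          rw [smul_sub]; module
        · exact ht ▸ ⟨β, hβC, β, hβC, by rw [zero_smul]; abel⟩
        · exact ⟨t • a1, hsmulC _ ht _ ha1, t • a2, hsmulC _ ht _ ha2, by rw [smul_sub]⟩ } with hS
  have hCS : {x | subdiff (penF u) x = subdiff (penF u) β} ⊆ S := by
    intro c hc
    rw [hCsub] at hc
    exact ⟨c + β, hmemC _ hc _ hβC, β, hβC, by abel⟩
  have := Submodule.span_le.2 hCS hd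
  obtain ⟨c1, hc1, c2, hc2, rfl⟩ := this
  exact ⟨c1, c2, (subdiff_eq_iff_ISet_eq u).2 hc1, (subdiff_eq_iff_ISet_eq u).2 hc2, rfl⟩

/-- span of differences of the active `u i`'s -/
def deltaSub (β : EuclideanSpace ℝ (Fin p)) : Submodule ℝ (EuclideanSpace ℝ (Fin p)) :=
  Submodule.span ℝ {w | ∃ i ∈ ISet u β, ∃ j ∈ ISet u β, w = u i - u j}

lemma span_class_eq_orth (β : EuclideanSpace ℝ (Fin p)) :
    Submodule.span ℝ {x | subdiff (penF u) x = subdiff (penF u) β} = (deltaSub u β)ᗮ := by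
  apply le_antisymm
  · rw [Submodule.span_le]
    intro x hx
    have hI : ISet u x = ISet u β := (subdiff_eq_iff_ISet_eq u).1 hx
    rw [SetLike.mem_coe, Submodule.mem_orthogonal]
    intro v hv
    induction hv using Submodule.span_induction with
    | mem w hw =>
      obtain ⟨i, hi, j, hj, rfl⟩ := hw
      rw [← hI] at hi hj
      rw [mem_ISet] at hi hj
      rw [inner_sub_left, hi, hj, sub_self]
    | zero => rw [inner_zero_left]
    | add a b _ _ ha hb => rw [inner_add_left, ha, hb, add_zero]
    | smul t a _ ha => rw [inner_smul_left, ha, mul_zero]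
  · intro t ht
    have hinner : ∀ i ∈ ISet u β, ∀ j ∈ ISet u β, ⟪u i, t⟫ = ⟪u j, t⟫ := by
      intro i hi j hj
      have := (Submodule.mem_orthogonal _ _).1 ht (u i - u j)
        (Submodule.subset_span ⟨i, hi, j, hj, rfl⟩)
      rw [inner_sub_left] at this
      linarith
    obtain ⟨δ₀, hδ₀, hgap⟩ := penF_gap u β t
    obtain ⟨-, hfilt⟩ := hgap (δ₀/2) (by linarith) (by linarith)
    have hfull : ISet u (β + (δ₀/2) • t) = ISet u β := by
      rw [hfilt]
      apply Finset.filter_true_of_mem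
      intro i hi
      obtain ⟨j, hj, hjeq⟩ := Finset.exists_mem_eq_sup' (ISet_nonempty u β) fun i => ⟪u i, t⟫
      rw [hjeq]
      exact hinner i hi j hj
    have hc1 : (β + (δ₀/2) • t) ∈ {x | subdiff (penF u) x = subdiff (penF u) β} := by
      simp only [Set.mem_setOf_eq]
      exact (subdiff_eq_iff_ISet_eq u).2 hfull
    have hβ : β ∈ {x | subdiff (penF u) x = subdiff (penF u) β} := by
      simp only [Set.mem_setOf_eq]
    have ht2 : t = (δ₀/2)⁻¹ • ((β + (δ₀/2) • t) - β) := by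
      rw [add_sub_cancel_left, smul_smul, inv_mul_cancel₀ (by linarith), one_smul]
    rw [ht2]
    exact Submodule.smul_mem _ _ (Submodule.sub_mem _
      (Submodule.subset_span hc1) (Submodule.subset_span hβ))

lemma finrank_span_class (β : EuclideanSpace ℝ (Fin p)) :
    Module.finrank ℝ (Submodule.span ℝ {x | subdiff (penF u) x = subdiff (penF u) β})
      + Module.finrank ℝ (deltaSub u β) = p := by
  rw [span_class_eq_orth]
  have := Submodule.finrank_add_finrank_orthogonal (𝕜 := ℝ) (deltaSub u β)
  have hE : Module.finrank ℝ (EuclideanSpace ℝ (Fin p)) = p := by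
    simp [finrank_euclideanSpace]
  omega

end PatternClass

section Plumbing
variable {n p : ℕ}

/-- the linear map `b ↦ X b` between Euclidean spaces -/
def mulVecLE (X : Matrix (Fin n) (Fin p) ℝ) :
    EuclideanSpace ℝ (Fin p) →ₗ[ℝ] EuclideanSpace ℝ (Fin n) :=
  (WithLp.linearEquiv 2 ℝ (Fin n → ℝ)).symm.toLinearMap ∘ₗ X.mulVecLin ∘ₗ
    (WithLp.linearEquiv 2 ℝ (Fin p → ℝ)).toLinearMap

lemma mulVecLE_apply (X : Matrix (Fin n) (Fin p) ℝ) (b : EuclideanSpace ℝ (Fin p)) :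
    mulVecLE X b = toEuc (X.mulVec b) := rfl

lemma inner_euc (m : ℕ) (x y : EuclideanSpace ℝ (Fin m)) : ⟪x, y⟫ = ∑ i, x i * y i := by
  rw [PiLp.inner_apply]
  refine Finset.sum_congr rfl fun i _ => ?_
  simp [mul_comm]

lemma adj_inner (X : Matrix (Fin n) (Fin p) ℝ) (a : EuclideanSpace ℝ (Fin n))
    (b : EuclideanSpace ℝ (Fin p)) :
    ⟪toEuc (X.transpose.mulVec a), b⟫ = ⟪a, toEuc (X.mulVec b)⟫ := by
  rw [inner_euc, inner_euc]
  have h1 : ∀ j, (toEuc (X.transpose.mulVec a) : EuclideanSpace ℝ (Fin p)) j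
      = ∑ i, X i j * a i := by
    intro j
    show (X.transpose.mulVec a) j = _
    rw [Matrix.mulVec]
    simp [dotProduct, Matrix.transpose_apply]
  have h2 : ∀ i, (toEuc (X.mulVec b) : EuclideanSpace ℝ (Fin n)) i = ∑ j, X i j * b j := by
    intro i
    show (X.mulVec b) i = _
    rw [Matrix.mulVec]
    simp [dotProduct]
  simp_rw [h1, h2, Finset.sum_mul, Finset.mul_sum]
  rw [Finset.sum_comm]
  congr 1; funext i; congr 1; funext j; ring

/-- the row space as a submodule -/
def rowSub (X : Matrix (Fin n) (Fin p) ℝ) : Submodule ℝ (EuclideanSpace ℝ (Fin p)) :=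
  LinearMap.range (mulVecLE X.transpose)

lemma rowSpace_eq_rowSub (X : Matrix (Fin n) (Fin p) ℝ) :
    rowSpace X = (rowSub X : Set (EuclideanSpace ℝ (Fin p))) := by
  ext x
  simp only [rowSpace, Set.mem_range, SetLike.mem_coe, LinearMap.mem_range]
  rfl

lemma finrank_range_mulVecLE (X : Matrix (Fin n) (Fin p) ℝ) :
    Module.finrank ℝ (LinearMap.range (mulVecLE X)) = X.rank := by
  rw [Matrix.rank]
  rw [mulVecLE, LinearMap.range_comp, LinearMap.range_comp]
  rw [LinearEquiv.range, Submodule.map_top]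
  exact LinearEquiv.finrank_map_eq _ _

lemma finrank_rowSub (X : Matrix (Fin n) (Fin p) ℝ) :
    Module.finrank ℝ (rowSub X) = X.rank := by
  rw [rowSub, finrank_range_mulVecLE, Matrix.rank_transpose]

lemma finrank_ker_mulVecLE (X : Matrix (Fin n) (Fin p) ℝ) :
    Module.finrank ℝ (LinearMap.ker (mulVecLE X)) = p - X.rank := by
  have h := LinearMap.finrank_range_add_finrank_ker (mulVecLE X)
  rw [finrank_range_mulVecLE] at h
  have hE : Module.finrank ℝ (EuclideanSpace ℝ (Fin p)) = p := by
    simp [finrank_euclideanSpace]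
  omega

lemma rank_le_p (X : Matrix (Fin n) (Fin p) ℝ) : X.rank ≤ p := by
  have h := LinearMap.finrank_range_add_finrank_ker (mulVecLE X)
  rw [finrank_range_mulVecLE] at h
  have hE : Module.finrank ℝ (EuclideanSpace ℝ (Fin p)) = p := by
    simp [finrank_euclideanSpace]
  omega

/-- kernel elements are orthogonal to the row space -/
lemma ker_orth_row (X : Matrix (Fin n) (Fin p) ℝ) {d : EuclideanSpace ℝ (Fin p)}
    (hd : mulVecLE X d = 0) (w : EuclideanSpace ℝ (Fin p)) (hw : w ∈ rowSub X) :
    ⟪w, d⟫ = 0 := by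
  obtain ⟨z, rfl⟩ := hw
  rw [mulVecLE_apply, adj_inner, ← mulVecLE_apply, hd, inner_zero_right]

end Plumbing

set_option maxHeartbeats 1000000
section Opt
variable {n p k : ℕ} (u : Fin (k+1) → EuclideanSpace ℝ (Fin p))
variable (X : Matrix (Fin n) (Fin p) ℝ) {lam : ℝ}

lemma Smin_forall {pen : EuclideanSpace ℝ (Fin p) → ℝ} {y} {b : EuclideanSpace ℝ (Fin p)} (hb : b ∈ Smin X lam pen y) :
    ∀ b' : EuclideanSpace ℝ (Fin p), (1/2) * ‖y - toEuc (X.mulVec b)‖^2 + lam * pen b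
        ≤ (1/2) * ‖y - toEuc (X.mulVec b')‖^2 + lam * pen b' := fun b' => hb b'

lemma Smin_of_forall {pen : EuclideanSpace ℝ (Fin p) → ℝ} {y} {b : EuclideanSpace ℝ (Fin p)}
    (h : ∀ b' : EuclideanSpace ℝ (Fin p), (1/2) * ‖y - toEuc (X.mulVec b)‖^2 + lam * pen b
        ≤ (1/2) * ‖y - toEuc (X.mulVec b')‖^2 + lam * pen b') : b ∈ Smin X lam pen y :=
  fun b' => h b'

lemma opt_suff (hlam : 0 < lam) {y : EuclideanSpace ℝ (Fin n)}
    {b s : EuclideanSpace ℝ (Fin p)}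
    (hs : s ∈ subdiff (penF u) b)
    (heq : toEuc (X.transpose.mulVec ((y - toEuc (X.mulVec b) : EuclideanSpace ℝ (Fin n)))) = lam • s) :
    b ∈ Smin X lam (penF u) y := by
  apply Smin_of_forall
  intro b'
  set A : EuclideanSpace ℝ (Fin n) := y - toEuc (X.mulVec b) with hA
  set v : EuclideanSpace ℝ (Fin n) := mulVecLE X b' - mulVecLE X b with hv
  have hA' : y - toEuc (X.mulVec b') = A - v := by
    rw [hA, hv, mulVecLE_apply, mulVecLE_apply]
    abel
  have hnorm : ‖A - v‖^2 = ‖A‖^2 - 2 * ⟪A, v⟫ + ‖v‖^2 := norm_sub_sq_real A v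
  have hAv : ⟪A, v⟫ = lam * ⟪s, b' - b⟫ := by
    have : v = mulVecLE X (b' - b) := by rw [map_sub]
    rw [this, mulVecLE_apply, ← adj_inner, heq, real_inner_smul_left]
  have hsub := hs b'
  have hinner : ⟪s, b' - b⟫ ≤ penF u b' - penF u b := by linarith
  have hle : ⟪A, v⟫ ≤ lam * (penF u b' - penF u b) := by
    rw [hAv]
    exact mul_le_mul_of_nonneg_left hinner hlam.le
  rw [hA']
  nlinarith [sq_nonneg ‖v‖, hnorm]

lemma opt_nec (hlam : 0 < lam) {y : EuclideanSpace ℝ (Fin n)}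
    {b : EuclideanSpace ℝ (Fin p)} (hb : b ∈ Smin X lam (penF u) y) :
    lam⁻¹ • toEuc (X.transpose.mulVec ((y - toEuc (X.mulVec b) : EuclideanSpace ℝ (Fin n)))) ∈ subdiff (penF u) b := by
  have hbf := Smin_forall X hb
  set A : EuclideanSpace ℝ (Fin n) := y - toEuc (X.mulVec b) with hA
  intro c
  set v : EuclideanSpace ℝ (Fin n) := mulVecLE X (c - b) with hv
  have key : ∀ t : ℝ, 0 < t → t ≤ 1 → ⟪A, v⟫ ≤ t/2 * ‖v‖^2 + lam * (penF u c - penF u b) := by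
    intro t ht0 ht1
    have hmin := hbf (b + t • (c - b))
    have hXbt : y - toEuc (X.mulVec ((b + t • (c - b) : EuclideanSpace ℝ (Fin p)))) = A - t • v := by
      have : mulVecLE X (b + t • (c - b)) = mulVecLE X b + t • mulVecLE X (c - b) := by
        rw [map_add, map_smul]
      rw [← mulVecLE_apply, this, hA, ← mulVecLE_apply X b, hv]
      abel
    have hpen : penF u (b + t • (c - b)) ≤ (1 - t) * penF u b + t * penF u c := by
      have hcomb : b + t • (c - b) = (1 - t) • b + t • c := by module
      rw [hcomb]
      exact penF_convex u (by linarith) ht0.le b c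
    have hnorm : ‖A - t • v‖^2 = ‖A‖^2 - 2 * (t * ⟪A, v⟫) + t^2 * ‖v‖^2 := by
      rw [norm_sub_sq_real, real_inner_smul_right, norm_smul]
      rw [Real.norm_eq_abs, abs_of_pos ht0]
      ring
    rw [hXbt] at hmin
    have hlampen := mul_le_mul_of_nonneg_left hpen hlam.le
    nlinarith [hmin, hlampen]
  have hfin : ⟪A, v⟫ ≤ lam * (penF u c - penF u b) := by
    apply le_of_forall_pos_le_add
    intro ε hε
    have ht0 : 0 < min 1 (2 * ε / (‖v‖^2 + 1)) := by positivity
    have ht1 : min 1 (2 * ε / (‖v‖^2 + 1)) ≤ 1 := min_le_left _ _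
    have h := key _ ht0 ht1
    have hb2 : min 1 (2 * ε / (‖v‖^2 + 1)) ≤ 2 * ε / (‖v‖^2 + 1) := min_le_right _ _
    have hv2 : (0:ℝ) ≤ ‖v‖^2 := sq_nonneg _
    have : min 1 (2 * ε / (‖v‖^2 + 1)) / 2 * ‖v‖^2 ≤ ε := by
      rw [div_mul_eq_mul_div, div_le_iff₀ (by norm_num : (0:ℝ) < 2)]
      calc min 1 (2 * ε / (‖v‖^2 + 1)) * ‖v‖^2 ≤ 2 * ε / (‖v‖^2 + 1) * ‖v‖^2 :=
            mul_le_mul_of_nonneg_right hb2 hv2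
        _ ≤ ε * 2 := by
            rw [div_mul_eq_mul_div, div_le_iff₀ (by positivity : (0:ℝ) < ‖v‖^2 + 1)]
            nlinarith
    linarith
  have hgoal : penF u b + lam⁻¹ * ⟪A, v⟫ ≤ penF u c := by
    have h2 : lam⁻¹ * ⟪A, v⟫ ≤ lam⁻¹ * (lam * (penF u c - penF u b)) :=
      mul_le_mul_of_nonneg_left hfin (by positivity)
    rw [inv_mul_cancel_left₀ (ne_of_gt hlam)] at h2
    linarith
  have hid : ⟪lam⁻¹ • toEuc (X.transpose.mulVec A), c - b⟫ = lam⁻¹ * ⟪A, v⟫ := by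
    rw [real_inner_smul_left, adj_inner, hv, mulVecLE_apply]
  rw [hid]
  exact hgoal

lemma Smin_structure (hlam : 0 < lam) {y : EuclideanSpace ℝ (Fin n)}
    {b0 b1 : EuclideanSpace ℝ (Fin p)}
    (hb0 : b0 ∈ Smin X lam (penF u) y) (hb1 : b1 ∈ Smin X lam (penF u) y) :
    toEuc (X.mulVec b0) = toEuc (X.mulVec b1) ∧ penF u b0 = penF u b1 ∧
      ((1/2 : ℝ) • (b0 + b1)) ∈ Smin X lam (penF u) y ∧
      penF u ((1/2 : ℝ) • (b0 + b1)) = penF u b0 := by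
  set m : EuclideanSpace ℝ (Fin p) := (1/2 : ℝ) • (b0 + b1) with hm
  set A0 : EuclideanSpace ℝ (Fin n) := y - toEuc (X.mulVec b0) with hA0
  set A1 : EuclideanSpace ℝ (Fin n) := y - toEuc (X.mulVec b1) with hA1
  have hb0f := Smin_forall X hb0
  have hb1f := Smin_forall X hb1
  have hmu0 : (1/2) * ‖A0‖^2 + lam * penF u b0 ≤ (1/2) * ‖A1‖^2 + lam * penF u b1 := hb0f b1
  have hmu1 : (1/2) * ‖A1‖^2 + lam * penF u b1 ≤ (1/2) * ‖A0‖^2 + lam * penF u b0 := hb1f b0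
  have hmu : (1/2) * ‖A0‖^2 + lam * penF u b0 = (1/2) * ‖A1‖^2 + lam * penF u b1 :=
    le_antisymm hmu0 hmu1
  have hXm : y - toEuc (X.mulVec m) = (1/2 : ℝ) • (A0 + A1) := by
    have : mulVecLE X m = (1/2 : ℝ) • (mulVecLE X b0 + mulVecLE X b1) := by
      rw [hm, map_smul, map_add]
    rw [← mulVecLE_apply, this, hA0, hA1, ← mulVecLE_apply X b0, ← mulVecLE_apply X b1]
    module
  have hnm : ‖(1/2 : ℝ) • (A0 + A1)‖^2 = (1/4) * ‖A0 + A1‖^2 := by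
    rw [norm_smul]
    simp
    ring
  have hpar : ‖A0 + A1‖^2 = 2*‖A0‖^2 + 2*‖A1‖^2 - ‖A0 - A1‖^2 := by
    have h1 := norm_add_sq_real A0 A1
    have h2 := norm_sub_sq_real A0 A1
    linarith
  have hpenm : penF u m ≤ (1/2) * penF u b0 + (1/2) * penF u b1 := by
    have : m = (1/2 : ℝ) • b0 + (1/2 : ℝ) • b1 := by rw [hm]; module
    rw [this]
    exact penF_convex u (by norm_num) (by norm_num) b0 b1
  have hfm : (1/2) * ‖A0‖^2 + lam * penF u b0
      ≤ (1/2) * ‖y - toEuc (X.mulVec m)‖^2 + lam * penF u m := hb0f m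
  rw [hXm, hnm] at hfm
  have hlampenm := mul_le_mul_of_nonneg_left hpenm hlam.le
  have hA01 : ‖A0 - A1‖^2 ≤ 0 := by nlinarith
  have hA01' : A0 = A1 := by
    have : ‖A0 - A1‖^2 = 0 := le_antisymm hA01 (sq_nonneg _)
    have : ‖A0 - A1‖ = 0 := by
      nlinarith [norm_nonneg (A0 - A1)]
    rw [norm_eq_zero, sub_eq_zero] at this
    exact this
  have hXb : toEuc (X.mulVec b0) = toEuc (X.mulVec b1) := by
    have h := hA01'
    rw [hA0, hA1] at h
    have := congrArg (fun z => y - z) (sub_right_injective h)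
    exact sub_right_injective h
  have hpeneq : penF u b0 = penF u b1 := by
    rw [hA01'] at hmu
    have := mul_left_cancel₀ (ne_of_gt hlam) (by linarith : lam * penF u b0 = lam * penF u b1)
    exact this
  have hpenmeq : penF u m = penF u b0 := by
    apply le_antisymm
    · rw [hpeneq] at hpenm ⊢
      linarith
    · rw [hA01'] at hfm
      have hq : ‖(1/2 : ℝ) • (A1 + A1)‖^2 = ‖A1‖^2 := by
        have : (1/2 : ℝ) • (A1 + A1) = A1 := by module
        rw [this]
      rw [hpeneq]
      rw [hA01'] at hnm hpar
      nlinarith [hfm]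
  have hmmem : m ∈ Smin X lam (penF u) y := by
    apply Smin_of_forall
    intro b'
    have h1 : (1/2) * ‖y - toEuc (X.mulVec m)‖^2 + lam * penF u m
        = (1/2) * ‖A0‖^2 + lam * penF u b0 := by
      rw [hXm, hA01', hpenmeq]
      have : (1/2 : ℝ) • (A1 + A1) = A1 := by module
      rw [this]
    rw [h1]
    exact hb0f b'
  exact ⟨hXb, hpeneq, hmmem, hpenmeq⟩

lemma mid_inner_eq (hlam : 0 < lam) {y : EuclideanSpace ℝ (Fin n)}
    {b0 b1 : EuclideanSpace ℝ (Fin p)}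
    (hb0 : b0 ∈ Smin X lam (penF u) y) (hb1 : b1 ∈ Smin X lam (penF u) y)
    {i : Fin (k+1)} (hi : i ∈ ISet u ((1/2 : ℝ) • (b0 + b1))) :
    ⟪u i, b0 - b1⟫ = 0 := by
  obtain ⟨hXb, hpeneq, hmmem, hpenmeq⟩ := Smin_structure u X hlam hb0 hb1
  rw [mem_ISet] at hi
  have hmid : ⟪u i, (1/2 : ℝ) • (b0 + b1)⟫ = (1/2) * (⟪u i, b0⟫ + ⟪u i, b1⟫) := by
    rw [real_inner_smul_right, inner_add_right]
  have h0 : ⟪u i, b0⟫ ≤ penF u b0 := le_penF u i b0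
  have h1 : ⟪u i, b1⟫ ≤ penF u b1 := le_penF u i b1
  rw [hmid, hpenmeq] at hi
  rw [inner_sub_right]
  rw [← hpeneq] at h1
  linarith
end Opt

section Existence
variable {n p k : ℕ} (u : Fin (k+1) → EuclideanSpace ℝ (Fin p))
variable (X : Matrix (Fin n) (Fin p) ℝ) {lam : ℝ}

/-- penalty restricted to an index subset -/
def penT (T : Finset (Fin (k+1))) (hT : T.Nonempty) (x : EuclideanSpace ℝ (Fin p)) : ℝ :=
  T.sup' hT fun i => ⟪u i, x⟫

lemma penT_le_iff {T : Finset (Fin (k+1))} {hT : T.Nonempty} {x : EuclideanSpace ℝ (Fin p)} {c : ℝ} :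
    penT u T hT x ≤ c ↔ ∀ i ∈ T, ⟪u i, x⟫ ≤ c := Finset.sup'_le_iff hT _

lemma le_penT {T : Finset (Fin (k+1))} (hT : T.Nonempty) {i : Fin (k+1)} (hi : i ∈ T)
    (x : EuclideanSpace ℝ (Fin p)) : ⟪u i, x⟫ ≤ penT u T hT x :=
  Finset.le_sup' (fun i => ⟪u i, x⟫) hi

lemma penT_zero {T : Finset (Fin (k+1))} {hT : T.Nonempty} : penT u T hT (0 : EuclideanSpace ℝ (Fin p)) = 0 := by
  rw [penT]
  rw [show (fun i => ⟪u i, (0:EuclideanSpace ℝ (Fin p))⟫) = fun _ => (0:ℝ) by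
    funext i; exact inner_zero_right _]
  exact Finset.sup'_const hT 0

lemma penT_nonneg {T : Finset (Fin (k+1))} (hT : T.Nonempty) (hu : u 0 = 0)
    (h0 : (0 : Fin (k+1)) ∈ T) (x : EuclideanSpace ℝ (Fin p)) : 0 ≤ penT u T hT x := by
  have := le_penT u hT h0 x
  rwa [hu, inner_zero_left] at this

lemma penT_continuous {T : Finset (Fin (k+1))} {hT : T.Nonempty} : Continuous (penT u T hT) := by
  set M := T.sup' hT fun i => ‖u i‖ with hM
  obtain ⟨i₀, hi₀⟩ := id hT
  have hM0 : 0 ≤ M := le_trans (norm_nonneg (u i₀)) (Finset.le_sup' (fun i => ‖u i‖) hi₀)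
  have hbound : ∀ x y : EuclideanSpace ℝ (Fin p), penT u T hT x ≤ penT u T hT y + M * ‖x - y‖ := by
    intro x y
    rw [penT_le_iff]
    intro i hi
    have h1 : ⟪u i, x⟫ - ⟪u i, y⟫ = ⟪u i, x - y⟫ := (inner_sub_right _ _ _).symm
    have h2 : ⟪u i, x - y⟫ ≤ ‖u i‖ * ‖x - y‖ := real_inner_le_norm _ _
    have h3 : ‖u i‖ ≤ M := Finset.le_sup' (fun i => ‖u i‖) hi
    have h4 : ⟪u i, y⟫ ≤ penT u T hT y := le_penT u hT hi y
    nlinarith [norm_nonneg (x - y)]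
  have : LipschitzWith (Real.toNNReal M) (penT u T hT) := by
    apply LipschitzWith.of_dist_le_mul
    intro x y
    rw [Real.dist_eq, Real.coe_toNNReal _ hM0, abs_sub_le_iff]
    constructor
    · have := hbound x y; rw [← dist_eq_norm] at this; linarith
    · have := hbound y x; rw [← dist_eq_norm, dist_comm] at this; linarith
  exact this.continuous

lemma exists_min_T (hu : u 0 = 0) (hlam : 0 < lam) (y : EuclideanSpace ℝ (Fin n)) :
    ∀ (N : ℕ) (T : Finset (Fin (k+1))) (h0 : (0 : Fin (k+1)) ∈ T), T.card ≤ N →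
    ∃ b : EuclideanSpace ℝ (Fin p), ∀ b' : EuclideanSpace ℝ (Fin p),
      (1/2) * ‖y - toEuc (X.mulVec b)‖^2 + lam * penT u T ⟨0, h0⟩ b
        ≤ (1/2) * ‖y - toEuc (X.mulVec b')‖^2 + lam * penT u T ⟨0, h0⟩ b' := by
  intro N
  induction N with
  | zero =>
    intro T h0 hcard
    exact absurd (Finset.card_eq_zero.1 (Nat.le_zero.1 hcard)) (Finset.ne_empty_of_mem h0)
  | succ N IH =>
    intro T h0 hcard
    set hT : T.Nonempty := ⟨0, h0⟩ with hhT
    by_cases hcase : ∃ t : EuclideanSpace ℝ (Fin p), mulVecLE X t = 0 ∧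
        (∀ i ∈ T, ⟪u i, t⟫ ≤ 0) ∧ (∃ j ∈ T, ⟪u j, t⟫ < 0)
    · -- Case 1: reduce the index set
      obtain ⟨t, hXt, hle, j, hjT, hjlt⟩ := hcase
      set T' : Finset (Fin (k+1)) := T.filter (fun i => ⟪u i, t⟫ = 0) with hT'
      have h0' : (0 : Fin (k+1)) ∈ T' := by
        rw [hT', Finset.mem_filter]
        exact ⟨h0, by rw [hu, inner_zero_left]⟩
      have hT'sub : T' ⊆ T := Finset.filter_subset _ _
      have hjT' : j ∉ T' := by
        rw [hT', Finset.mem_filter]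
        rintro ⟨-, h⟩
        exact absurd h (ne_of_lt hjlt)
      have hcard' : T'.card ≤ N := by
        have : T' ⊂ T := ⟨hT'sub, fun h => hjT' (h hjT)⟩
        have := Finset.card_lt_card this
        omega
      obtain ⟨bs, hbs⟩ := IH T' h0' hcard'
      set M' := penT u T' ⟨0, h0'⟩ bs with hM'
      set g : Fin (k+1) → ℝ :=
        fun i => if ⟪u i, t⟫ < 0 then (⟪u i, bs⟫ - M') / (-⟪u i, t⟫) else 0 with hg
      set s₀ : ℝ := max 0 (T.sup' hT g) with hs₀
      have hs₀0 : 0 ≤ s₀ := le_max_left _ _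
      have hpen_new : penT u T hT (bs + s₀ • t) = M' := by
        apply le_antisymm
        · rw [penT_le_iff]
          intro i hiT
          rw [inner_add_right, real_inner_smul_right]
          by_cases hiT' : i ∈ T'
          · have hz : ⟪u i, t⟫ = 0 := (Finset.mem_filter.1 hiT').2
            rw [hz, mul_zero, add_zero]
            exact le_penT u _ hiT' bs
          · have hneg : ⟪u i, t⟫ < 0 :=
              lt_of_le_of_ne (hle i hiT) (fun h => hiT' (Finset.mem_filter.2 ⟨hiT, h⟩))
            have hgi : g i = (⟪u i, bs⟫ - M') / (-⟪u i, t⟫) := by simp only [hg]; rw [if_pos hneg]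
            have hgs : g i ≤ s₀ := le_trans (Finset.le_sup' g hiT) (le_max_right _ _)
            have hmul : s₀ * ⟪u i, t⟫ ≤ g i * ⟪u i, t⟫ := by nlinarith
            have hc : ⟪u i, t⟫ ≠ 0 := ne_of_lt hneg
            have hgit : g i * ⟪u i, t⟫ = -(⟪u i, bs⟫ - M') := by
              rw [hgi, div_mul_eq_mul_div, mul_div_assoc, div_neg, div_self hc]
              ring
            linarith
        · obtain ⟨i₀, hi₀T', hi₀⟩ := Finset.exists_mem_eq_sup' (⟨0, h0'⟩ : T'.Nonempty)
            (fun i => ⟪u i, bs⟫)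
          have hz : ⟪u i₀, t⟫ = 0 := (Finset.mem_filter.1 hi₀T').2
          have hc0 : ⟪u i₀, bs + s₀ • t⟫ = ⟪u i₀, bs⟫ := by
            rw [inner_add_right, real_inner_smul_right, hz, mul_zero, add_zero]
          have hM'eq : M' = ⟪u i₀, bs + s₀ • t⟫ := by
            rw [hc0, hM']
            exact hi₀
          rw [hM'eq]
          exact le_penT u _ (hT'sub hi₀T') _
      have hX_new : toEuc (X.mulVec ((bs + s₀ • t : EuclideanSpace ℝ (Fin p)))) = toEuc (X.mulVec bs) := by
        rw [← mulVecLE_apply, ← mulVecLE_apply, map_add, map_smul, hXt, smul_zero, add_zero]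
      refine ⟨bs + s₀ • t, fun b' => ?_⟩
      have h1 : penT u T' ⟨0, h0'⟩ b' ≤ penT u T hT b' :=
        Finset.sup'_mono (fun i => ⟪u i, b'⟫) hT'sub _
      have h2 := hbs b'
      rw [hX_new, hpen_new]
      have h3 := mul_le_mul_of_nonneg_left h1 hlam.le
      linarith
    · -- Case 2: recession directions form a subspace
      push_neg at hcase
      set R : Submodule ℝ (EuclideanSpace ℝ (Fin p)) :=
        { carrier := {t | mulVecLE X t = 0 ∧ ∀ i ∈ T, ⟪u i, t⟫ = 0}
          add_mem' := by
            rintro a b ⟨ha1, ha2⟩ ⟨hb1, hb2⟩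
            exact ⟨by rw [map_add, ha1, hb1, add_zero], fun i hi => by
              rw [inner_add_right, ha2 i hi, hb2 i hi, add_zero]⟩
          zero_mem' := ⟨map_zero _, fun i hi => inner_zero_right _⟩
          smul_mem' := by
            rintro c a ⟨ha1, ha2⟩
            exact ⟨by rw [map_smul, ha1, smul_zero], fun i hi => by
              rw [real_inner_smul_right, ha2 i hi, mul_zero]⟩ } with hR
      set q : EuclideanSpace ℝ (Fin p) → ℝ :=
        fun b => (1/2) * ‖y - mulVecLE X b‖^2 + lam * penT u T hT b with hq
      have hgoalq : ∀ b : EuclideanSpace ℝ (Fin p),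
          (1/2) * ‖y - toEuc (X.mulVec b)‖^2 + lam * penT u T hT b = q b := fun b => rfl
      have hinv : ∀ t ∈ R, ∀ b, q (b + t) = q b := by
        intro t ht b
        obtain ⟨ht1, ht2⟩ := ht
        have hXb : mulVecLE X (b + t) = mulVecLE X b := by rw [map_add, ht1, add_zero]
        have hpen : penT u T hT (b + t) = penT u T hT b := by
          rw [penT, penT]
          apply Finset.sup'_congr hT rfl
          intro i hi
          rw [inner_add_right, ht2 i hi, add_zero]
        rw [hq]
        simp only
        rw [hXb, hpen]
      have hq0 : q 0 = (1/2) * ‖y‖^2 := by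
        rw [hq]
        simp only
        rw [penT_zero, mul_zero, add_zero, map_zero, sub_zero]
      by_cases hRtop : R = ⊤
      · refine ⟨0, fun b' => ?_⟩
        rw [hgoalq, hgoalq]
        have : q (0 + b') = q 0 := hinv b' (by rw [hRtop]; trivial) 0
        rw [zero_add] at this
        rw [this]
      · -- Rᗮ contains a unit vector; get the coercivity constant δ
        have hRbot : Rᗮ ≠ ⊥ := by
          intro h
          exact hRtop (Submodule.orthogonal_eq_bot_iff.1 h)
        obtain ⟨w, hwR, hw0⟩ := Submodule.exists_mem_ne_zero_of_ne_bot hRbot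
        set sp : Set (EuclideanSpace ℝ (Fin p)) := Metric.sphere 0 1 ∩ Rᗮ with hsp
        have hspne : sp.Nonempty := by
          refine ⟨‖w‖⁻¹ • w, ?_, Submodule.smul_mem _ _ hwR⟩
          have hwn : ‖w‖ ≠ 0 := norm_ne_zero_iff.2 hw0
          simp [norm_smul, abs_of_nonneg (inv_nonneg.2 (norm_nonneg w)),
            inv_mul_cancel₀ hwn]
        have hspc : IsCompact sp :=
          ((isCompact_sphere 0 1).inter_right (Submodule.closed_of_finiteDimensional Rᗮ))
        set gf : EuclideanSpace ℝ (Fin p) → ℝ :=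
          fun t => max ‖mulVecLE X t‖ (penT u T hT t) with hgf
        have hgc : Continuous gf :=
          Continuous.max ((mulVecLE X).continuous_of_finiteDimensional.norm)
            (penT_continuous u)
        obtain ⟨t₀, ht₀sp, ht₀min⟩ := hspc.exists_isMinOn hspne hgc.continuousOn
        set δ : ℝ := gf t₀ with hδ
        have ht₀n : ‖t₀‖ = 1 := by
          have := ht₀sp.1
          simpa using this
        have hδ0 : 0 < δ := by
          by_contra hcon
          push_neg at hcon
          have hmax : max ‖mulVecLE X t₀‖ (penT u T hT t₀) ≤ 0 := hcon
          have hXt₀ : mulVecLE X t₀ = 0 :=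
            norm_le_zero_iff.1 (le_trans (le_max_left _ _) hmax)
          have hpent₀ : ∀ i ∈ T, ⟪u i, t₀⟫ ≤ 0 :=
            (penT_le_iff u).1 (le_trans (le_max_right _ _) hmax)
          have hz : ∀ i ∈ T, ⟪u i, t₀⟫ = 0 := fun i hi =>
            le_antisymm (hpent₀ i hi) (hcase t₀ hXt₀ hpent₀ i hi)
          have ht₀R : t₀ ∈ R := ⟨hXt₀, hz⟩
          have : ⟪t₀, t₀⟫ = 0 := (Submodule.mem_orthogonal _ _).1 ht₀sp.2 t₀ ht₀R
          have : t₀ = 0 := by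
            rwa [real_inner_self_eq_norm_sq, ht₀n, one_pow, ← ht₀n, norm_eq_zero] at this
          rw [this] at ht₀n
          simp at ht₀n
        -- coercivity bound on Rᗮ
        set C1 : ℝ := 2 * ‖y‖ with hC1
        set C2 : ℝ := (1/2) * ‖y‖^2 / lam with hC2
        set ρ : ℝ := max (C1 / δ) (C2 / δ) with hρ
        have hkey : ∀ b : EuclideanSpace ℝ (Fin p), b ∈ Rᗮ → q b ≤ q 0 → ‖b‖ ≤ ρ := by
          intro b hbR hbq
          by_cases hb0 : b = 0
          · rw [hb0, norm_zero, hρ]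
            have : (0:ℝ) ≤ C1 / δ := by positivity
            exact le_trans this (le_max_left _ _)
          · have hbn : 0 < ‖b‖ := norm_pos_iff.2 hb0
            have hpenb : 0 ≤ penT u T hT b := penT_nonneg u hT hu h0 b
            have hquad : ‖y - mulVecLE X b‖^2 ≤ ‖y‖^2 := by
              rw [hq0] at hbq
              rw [hq] at hbq
              simp only at hbq
              nlinarith
            have hXbC : ‖mulVecLE X b‖ ≤ C1 := by
              have h1 : ‖y - mulVecLE X b‖ ≤ ‖y‖ := by
                nlinarith [norm_nonneg (y - mulVecLE X b), norm_nonneg y]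
              calc ‖mulVecLE X b‖ = ‖y - (y - mulVecLE X b)‖ := by congr 1; abel
              _ ≤ ‖y‖ + ‖y - mulVecLE X b‖ := norm_sub_le _ _
              _ ≤ 2 * ‖y‖ := by linarith
            have hpenC : penT u T hT b ≤ C2 := by
              rw [hq0] at hbq
              rw [hq] at hbq
              simp only at hbq
              rw [hC2, le_div_iff₀ hlam]
              nlinarith [sq_nonneg ‖y - mulVecLE X b‖]
            set tb : EuclideanSpace ℝ (Fin p) := ‖b‖⁻¹ • b with htb
            have htbsp : tb ∈ sp := by
              constructor
              · have : ‖tb‖ = 1 := by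
                  rw [htb, norm_smul, Real.norm_eq_abs, abs_of_nonneg (inv_nonneg.2 hbn.le),
                    inv_mul_cancel₀ (ne_of_gt hbn)]
                simpa using this
              · exact Submodule.smul_mem _ _ hbR
            have hgtb : δ ≤ gf tb := ht₀min htbsp
            rw [hgf] at hgtb
            rcases le_max_iff.1 hgtb with hcase1 | hcase2
            · have : ‖mulVecLE X tb‖ = ‖b‖⁻¹ * ‖mulVecLE X b‖ := by
                rw [htb, map_smul, norm_smul, Real.norm_eq_abs,
                  abs_of_nonneg (inv_nonneg.2 hbn.le)]
              rw [this] at hcase1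
              have hδb : δ * ‖b‖ ≤ ‖mulVecLE X b‖ := by
                have h' := mul_le_mul_of_nonneg_right hcase1 hbn.le
                have he : ‖b‖⁻¹ * ‖mulVecLE X b‖ * ‖b‖ = ‖mulVecLE X b‖ := by
                  field_simp
                rw [he] at h'
                exact h'
              have : ‖b‖ ≤ C1 / δ := by
                rw [le_div_iff₀ hδ0]
                nlinarith
              exact le_trans this (le_max_left _ _)
            · obtain ⟨i, hiT, hile⟩ := (Finset.le_sup'_iff hT).1 hcase2
              have : ⟪u i, tb⟫ = ‖b‖⁻¹ * ⟪u i, b⟫ := by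
                rw [htb, real_inner_smul_right]
              rw [this] at hile
              have hδb : δ * ‖b‖ ≤ ⟪u i, b⟫ := by
                have h' := mul_le_mul_of_nonneg_right hile hbn.le
                have he : ‖b‖⁻¹ * ⟪u i, b⟫ * ‖b‖ = ⟪u i, b⟫ := by
                  field_simp
                rw [he] at h'
                exact h'
              have hpb : ⟪u i, b⟫ ≤ penT u T hT b := le_penT u _ hiT b
              have : ‖b‖ ≤ C2 / δ := by
                rw [le_div_iff₀ hδ0]
                nlinarith
              exact le_trans this (le_max_right _ _)
        -- minimize over the compact sublevel set
        set S : Set (EuclideanSpace ℝ (Fin p)) := {b | b ∈ Rᗮ ∧ q b ≤ q 0} with hS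
        have hqc : Continuous q := by
          apply Continuous.add
          · exact (continuous_const.mul
              (((continuous_const.sub (mulVecLE X).continuous_of_finiteDimensional).norm).pow 2))
          · exact continuous_const.mul (penT_continuous u)
        have hScl : IsClosed S := by
          apply IsClosed.inter
          · exact Submodule.closed_of_finiteDimensional Rᗮ
          · exact isClosed_le hqc continuous_const
        have hSb : Bornology.IsBounded S := by
          apply Bornology.IsBounded.subset (Metric.isBounded_closedBall (x := (0:EuclideanSpace ℝ (Fin p))) (r := ρ))
          intro b hb
          rw [Metric.mem_closedBall, dist_zero_right]
          exact hkey b hb.1 hb.2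
        have hScomp : IsCompact S := Metric.isCompact_of_isClosed_isBounded hScl hSb
        have hSne : S.Nonempty := ⟨0, Submodule.zero_mem _, le_refl _⟩
        obtain ⟨bs, hbsS, hbsmin⟩ := hScomp.exists_isMinOn hSne hqc.continuousOn
        refine ⟨bs, fun b' => ?_⟩
        rw [hgoalq, hgoalq]
        obtain ⟨r, hr, w', hw', hbw⟩ := R.exists_add_mem_mem_orthogonal b'
        have hqb' : q b' = q w' := by
          rw [hbw, add_comm]
          exact hinv r hr w'
        by_cases hcw : q w' ≤ q 0
        · have : bs ∈ S := hbsS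
          have := hbsmin (⟨hw', hcw⟩ : w' ∈ S)
          rw [hqb']
          exact this
        · push_neg at hcw
          have h1 : q bs ≤ q 0 :=
            hbsmin (show (0:EuclideanSpace ℝ (Fin p)) ∈ S from ⟨Submodule.zero_mem _, le_refl _⟩)
          rw [hqb']
          linarith

lemma Smin_nonempty (hu : u 0 = 0) (hlam : 0 < lam) (y : EuclideanSpace ℝ (Fin n)) :
    ∃ b, b ∈ Smin X lam (penF u) y := by
  obtain ⟨b, hb⟩ := exists_min_T u X hu hlam y (Finset.univ.card) Finset.univ
    (Finset.mem_univ 0) le_rfl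
  refine ⟨b, Smin_of_forall X ?_⟩
  intro b'
  exact hb b'

end Existence

section Core
variable {p k : ℕ} (u : Fin (k+1) → EuclideanSpace ℝ (Fin p))

/-- span of differences over an index finset -/
def dspan (A : Finset (Fin (k+1))) : Submodule ℝ (EuclideanSpace ℝ (Fin p)) :=
  Submodule.span ℝ {w | ∃ i ∈ A, ∃ j ∈ A, w = u i - u j}

lemma hull_sub_mem_dspan (A : Finset (Fin (k+1)))
    {x e : EuclideanSpace ℝ (Fin p)}
    (hx : x ∈ convexHull ℝ (u '' (A : Set (Fin (k+1)))))
    (he : e ∈ convexHull ℝ (u '' (A : Set (Fin (k+1))))) :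
    x - e ∈ dspan u A := by
  obtain ⟨x₀, hx₀⟩ : ∃ x₀, x₀ ∈ u '' (A : Set (Fin (k+1))) := by
    obtain ⟨z, hz⟩ := (convexHull_nonempty_iff.mp ⟨x, hx⟩)
    exact ⟨z, hz⟩
  obtain ⟨i₀, hi₀A, rfl⟩ := hx₀
  have key : ∀ z ∈ convexHull ℝ (u '' (A : Set (Fin (k+1)))), z - u i₀ ∈ dspan u A := by
    intro z hz
    have hconv : Convex ℝ {z | z - u i₀ ∈ dspan u A} := by
      intro z1 h1 z2 h2 a b ha hb hab
      have : (a • z1 + b • z2) - u i₀ = a • (z1 - u i₀) + b • (z2 - u i₀)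
          + (a + b - 1) • u i₀ := by module
      simp only [Set.mem_setOf_eq] at h1 h2 ⊢
      rw [this, hab]
      simp only [sub_self, zero_smul, add_zero]
      exact Submodule.add_mem _ (Submodule.smul_mem _ _ h1) (Submodule.smul_mem _ _ h2)
    have hsubset : u '' (A : Set (Fin (k+1))) ⊆ {z | z - u i₀ ∈ dspan u A} := by
      rintro _ ⟨i, hiA, rfl⟩
      exact Submodule.subset_span ⟨i, by exact_mod_cast hiA, i₀, by exact_mod_cast hi₀A, rfl⟩
    exact convexHull_min hsubset hconv hz
  have h1 := key x hx
  have h2 := key e he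
  have : x - e = (x - u i₀) - (e - u i₀) := by abel
  rw [this]
  exact Submodule.sub_mem _ h1 h2

lemma hull_inner_le (A : Finset (Fin (k+1))) (hA : A.Nonempty)
    (c : EuclideanSpace ℝ (Fin p)) {x : EuclideanSpace ℝ (Fin p)}
    (hx : x ∈ convexHull ℝ (u '' (A : Set (Fin (k+1))))) :
    ⟪c, x⟫ ≤ A.sup' hA fun i => ⟪c, u i⟫ := by
  set M := A.sup' hA fun i => ⟪c, u i⟫ with hM
  have hconv : Convex ℝ {z : EuclideanSpace ℝ (Fin p) | ⟪c, z⟫ ≤ M} := by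
    apply convex_halfSpace_le
    exact ⟨fun a b => inner_add_right _ _ _, fun r a => real_inner_smul_right _ _ _⟩
  have hsubset : u '' (A : Set (Fin (k+1))) ⊆ {z | ⟪c, z⟫ ≤ M} := by
    rintro _ ⟨i, hiA, rfl⟩
    exact Finset.le_sup' (fun i => ⟪c, u i⟫) (by exact_mod_cast hiA)
  exact convexHull_min hsubset hconv hx

/-- concentration of a convex representation on the maximizing indices -/
lemma hull_concentrate (A : Finset (Fin (k+1))) (hA : A.Nonempty)
    (c : EuclideanSpace ℝ (Fin p)) {e : EuclideanSpace ℝ (Fin p)}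
    (he : e ∈ convexHull ℝ (u '' (A : Set (Fin (k+1)))))
    (heq : ⟪c, e⟫ = A.sup' hA fun i => ⟪c, u i⟫) :
    e ∈ convexHull ℝ (u '' ((A.filter fun i => ⟪u i, c⟫ = A.sup' hA fun i => ⟪u i, c⟫) :
      Set (Fin (k+1)))) := by
  classical
  set M := A.sup' hA fun i => ⟪c, u i⟫ with hM
  have hMe : A.sup' hA (fun i => ⟪u i, c⟫) = M := by
    rw [hM]
    apply Finset.sup'_congr hA rfl
    intro i _
    exact real_inner_comm _ _
  set B : Finset (EuclideanSpace ℝ (Fin p)) := A.image u with hB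
  have hBe : (u '' (A : Set (Fin (k+1)))) = ↑B := by rw [hB, Finset.coe_image]
  rw [hBe, Finset.convexHull_eq] at he
  obtain ⟨w, hw0, hw1, hwe⟩ := he
  set B' : Finset (EuclideanSpace ℝ (Fin p)) := B.filter fun y => ⟪c, y⟫ = M with hB'
  have hval : ∀ y ∈ B, ⟪c, y⟫ ≤ M := by
    rintro y hy
    obtain ⟨i, hiA, rfl⟩ := Finset.mem_image.1 hy
    exact Finset.le_sup' (fun i => ⟪c, u i⟫) hiA
  have hcm : e = ∑ y ∈ B, w y • y := by
    rw [← hwe, Finset.centerMass_eq_of_sum_1 _ _ hw1]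
    simp
  have hsum : ∑ y ∈ B, w y * ⟪c, y⟫ = M := by
    have : ⟪c, e⟫ = ∑ y ∈ B, w y * ⟪c, y⟫ := by
      rw [hcm, inner_sum]
      apply Finset.sum_congr rfl
      intro y _
      rw [real_inner_smul_right]
    rw [← this, heq]
  have hs : ∑ y ∈ B, w y * (M - ⟪c, y⟫) = 0 := by
    have e1 : ∑ y ∈ B, w y * (M - ⟪c, y⟫)
        = (∑ y ∈ B, w y) * M - ∑ y ∈ B, w y * ⟪c, y⟫ := by
      rw [Finset.sum_mul, ← Finset.sum_sub_distrib]
      apply Finset.sum_congr rfl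
      intro y _
      ring
    rw [e1, hw1, one_mul, hsum, sub_self]
  have hzero : ∀ y ∈ B, w y * (M - ⟪c, y⟫) = 0 :=
    (Finset.sum_eq_zero_iff_of_nonneg (fun y hy =>
      mul_nonneg (hw0 y hy) (by linarith [hval y hy]))).1 hs
  have hwz : ∀ y ∈ B, y ∉ B' → w y = 0 := by
    intro y hy hyB'
    have hne : ⟪c, y⟫ ≠ M := fun h => hyB' (Finset.mem_filter.2 ⟨hy, h⟩)
    rcases mul_eq_zero.1 (hzero y hy) with h | h
    · exact h
    · exact absurd (by linarith : ⟪c, y⟫ = M) hne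
  have hB'sub : B' ⊆ B := Finset.filter_subset _ _
  have hsum' : ∑ y ∈ B', w y = 1 := by
    rw [Finset.sum_subset hB'sub (fun y hy hyn => hwz y hy hyn)]
    exact hw1
  have hcm' : e = B'.centerMass w id := by
    rw [← hwe, Finset.centerMass_subset id hB'sub (fun y hy hyn => hwz y hy hyn)]
  rw [hcm']
  apply Finset.centerMass_mem_convexHull
  · intro y hy
    exact hw0 y (hB'sub hy)
  · rw [hsum']
    norm_num
  · intro y hy
    obtain ⟨hyB, hyM⟩ := Finset.mem_filter.1 hy
    obtain ⟨i, hiA, rfl⟩ := Finset.mem_image.1 hyB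
    refine ⟨i, ?_, rfl⟩
    have : ⟪u i, c⟫ = A.sup' hA fun i => ⟪u i, c⟫ := by
      rw [hMe, real_inner_comm]
      exact hyM
    exact_mod_cast Finset.mem_filter.2 ⟨hiA, this⟩
end Core

section CoreMain
variable {p k : ℕ} (u : Fin (k+1) → EuclideanSpace ℝ (Fin p))

lemma core_aux (I : Finset (Fin (k+1))) (hI : I.Nonempty)
    (W : Submodule ℝ (EuclideanSpace ℝ (Fin p))) :
    ∀ (N : ℕ) (A : Finset (Fin (k+1))), A.card ≤ N →
      (∃ c₀, A = I.filter fun i => ⟪u i, c₀⟫ = I.sup' hI fun i => ⟪u i, c₀⟫) →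
      (convexHull ℝ (u '' (A : Set (Fin (k+1)))) ∩ ↑W).Nonempty →
      ∃ c : EuclideanSpace ℝ (Fin p),
        (convexHull ℝ (u '' ((I.filter fun i => ⟪u i, c⟫ = I.sup' hI fun i => ⟪u i, c⟫) :
            Set (Fin (k+1)))) ∩ ↑W).Nonempty ∧
        dspan u (I.filter fun i => ⟪u i, c⟫ = I.sup' hI fun i => ⟪u i, c⟫) ⊓ W = ⊥ := by
  intro N
  induction N with
  | zero =>
    intro A hcard hex _
    obtain ⟨c₀, hc₀⟩ := hex
    have : A.Nonempty := hc₀ ▸ argmax_nonempty I hI _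
    have := Finset.card_pos.2 this
    omega
  | succ N IH =>
    intro A hcard hex hne
    obtain ⟨c₀, hc₀⟩ := hex
    have hAne : A.Nonempty := hc₀ ▸ argmax_nonempty I hI _
    by_cases hbot : dspan u A ⊓ W = ⊥
    · refine ⟨c₀, ?_, ?_⟩
      · rw [← hc₀]; exact hne
      · rw [← hc₀]; exact hbot
    · obtain ⟨w, hwmem, hw0⟩ := Submodule.exists_mem_ne_zero_of_ne_bot hbot
      rw [Submodule.mem_inf] at hwmem
      obtain ⟨hwV, hwW⟩ := hwmem
      obtain ⟨e, heG, heW⟩ := hne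
      set G : Set (EuclideanSpace ℝ (Fin p)) := convexHull ℝ (u '' (A : Set (Fin (k+1)))) with hG
      have hGcomp : IsCompact G := Set.Finite.isCompact_convexHull ℝ (Set.toFinite _)
      have hGconv : Convex ℝ G := convex_convexHull ℝ _
      have hGcl : IsClosed G := hGcomp.isClosed
      have hwn : (0:ℝ) < ‖w‖ := norm_pos_iff.2 hw0
      -- slide e along w as far as possible inside G
      set sSet : Set ℝ := {s : ℝ | 0 ≤ s ∧ e + s • w ∈ G} with hsSet
      have hs0 : (0:ℝ) ∈ sSet := by
        constructor
        · exact le_refl 0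
        · simpa using heG
      have hscl : IsClosed sSet := by
        have : sSet = Set.Ici (0:ℝ) ∩ (fun s : ℝ => e + s • w) ⁻¹' G := by
          ext s; simp [hsSet, Set.mem_Ici]
        rw [this]
        exact isClosed_Ici.inter (hGcl.preimage (by continuity))
      have hsbdd : BddAbove sSet := by
        obtain ⟨R, hR⟩ := hGcomp.isBounded.subset_closedBall (0 : EuclideanSpace ℝ (Fin p))
        refine ⟨(R + ‖e‖) / ‖w‖, ?_⟩
        intro s hs
        obtain ⟨hs0', hsG⟩ := hs
        have h1 : ‖e + s • w‖ ≤ R := by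
          have := hR hsG
          rwa [Metric.mem_closedBall, dist_zero_right] at this
        have h2 : ‖s • w‖ ≤ ‖e + s • w‖ + ‖e‖ := by
          calc ‖s • w‖ = ‖(e + s • w) - e‖ := by congr 1; abel
          _ ≤ ‖e + s • w‖ + ‖e‖ := norm_sub_le _ _
        rw [norm_smul, Real.norm_eq_abs, abs_of_nonneg hs0'] at h2
        rw [le_div_iff₀ hwn]
        nlinarith
      set sstar : ℝ := sSup sSet with hsstar
      have hsmem : sstar ∈ sSet := hscl.csSup_mem ⟨0, hs0⟩ hsbdd
      set e' : EuclideanSpace ℝ (Fin p) := e + sstar • w with he'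
      have he'G : e' ∈ G := hsmem.2
      have he'W : e' ∈ W := W.add_mem heW (W.smul_mem _ hwW)
      have hout : ∀ s : ℝ, 0 < s → e' + s • w ∉ G := by
        intro s hs hmem
        have hin : sstar + s ∈ sSet := by
          refine ⟨by linarith [hsmem.1], ?_⟩
          rw [add_smul]
          rw [he'] at hmem
          rw [← add_assoc]
          exact hmem
        have := le_csSup hsbdd hin
        linarith
      set V : Submodule ℝ (EuclideanSpace ℝ (Fin p)) := dspan u A with hV
      have hGV : ∀ x ∈ G, x - e' ∈ V := fun x hx => hull_sub_mem_dspan u A hx he'G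
      -- supporting functionals at points just outside G
      have hHB : ∀ m : ℕ, ∃ cm : EuclideanSpace ℝ (Fin p), cm ∈ V ∧ ‖cm‖ = 1 ∧
          ∀ x ∈ G, ⟪cm, x - (e' + (1/(m+1) : ℝ) • w)⟫ < 0 := by
        intro m
        set z : EuclideanSpace ℝ (Fin p) := e' + (1/(m+1) : ℝ) • w with hz
        have hmpos : (0:ℝ) < 1/(m+1) := by positivity
        have hzG : z ∉ G := hout _ hmpos
        obtain ⟨f, t, hft, htz⟩ := geometric_hahn_banach_closed_point hGconv hGcl hzG
        set h : EuclideanSpace ℝ (Fin p) :=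
          (InnerProductSpace.toDual ℝ (EuclideanSpace ℝ (Fin p))).symm f with hh
        have hfh : ∀ y, ⟪h, y⟫ = f y := fun y => InnerProductSpace.toDual_symm_apply
        set c' : EuclideanSpace ℝ (Fin p) := (V.orthogonalProjectionOnto h : EuclideanSpace ℝ (Fin p)) with hc'
        have hc'V : c' ∈ V := (V.orthogonalProjectionOnto h).2
        have hproj : ∀ v ∈ V, ⟪h, v⟫ = ⟪c', v⟫ := by
          intro v hv
          have horth : h - c' ∈ Vᗮ := Submodule.sub_starProjection_mem_orthogonal (K := V) h
          have := (Submodule.mem_orthogonal V (h - c')).1 horth v hv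
          have h2 : ⟪h - c', v⟫ = 0 := by rwa [real_inner_comm] at this
          rw [inner_sub_left] at h2
          linarith
        have hzx : ∀ x ∈ G, ⟪c', z - x⟫ > 0 := by
          intro x hx
          have hvV : z - x ∈ V := by
            have h1 : z - e' ∈ V := by
              rw [hz, add_sub_cancel_left]
              exact V.smul_mem _ hwV
            have h2 : x - e' ∈ V := hGV x hx
            have : z - x = (z - e') - (x - e') := by abel
            rw [this]
            exact V.sub_mem h1 h2
          have := hproj _ hvV
          rw [← this, inner_sub_right]
          rw [hfh, hfh]
          have := hft x hx
          linarith
        have hc'0 : c' ≠ 0 := by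
          intro hzero
          have := hzx e' he'G
          rw [hzero, inner_zero_left] at this
          exact lt_irrefl 0 this
        have hcn : (0:ℝ) < ‖c'‖ := norm_pos_iff.2 hc'0
        refine ⟨‖c'‖⁻¹ • c', V.smul_mem _ hc'V, ?_, ?_⟩
        · rw [norm_smul, Real.norm_eq_abs, abs_of_nonneg (inv_nonneg.2 hcn.le),
            inv_mul_cancel₀ (ne_of_gt hcn)]
        · intro x hx
          rw [real_inner_smul_left]
          have h1 := hzx x hx
          have h2 : ⟪c', x - z⟫ < 0 := by
            have : ⟪c', x - z⟫ = -⟪c', z - x⟫ := by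
              rw [← inner_neg_right]
              congr 1
              abel
            rw [this]
            linarith
          have : (0:ℝ) < ‖c'‖⁻¹ := by positivity
          exact mul_neg_of_pos_of_neg this h2
      choose ch hchV hchn hchlt using hHB
      set K : Set (EuclideanSpace ℝ (Fin p)) := Metric.sphere 0 1 ∩ ↑V with hK
      have hKcomp : IsCompact K :=
        (isCompact_sphere 0 1).inter_right (Submodule.closed_of_finiteDimensional V)
      have hchK : ∀ m, ch m ∈ K := fun m =>
        ⟨by rw [mem_sphere_zero_iff_norm]; exact hchn m, hchV m⟩
      obtain ⟨c₂, hc₂K, φ, hφ, hconv⟩ := hKcomp.tendsto_subseq hchK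
      have hc₂n : ‖c₂‖ = 1 := mem_sphere_zero_iff_norm.1 hc₂K.1
      have hc₂V : c₂ ∈ V := hc₂K.2
      -- pass the support inequality to the limit
      have hzlim : Filter.Tendsto (fun m : ℕ => e' + (1/(φ m + 1) : ℝ) • w)
          Filter.atTop (nhds e') := by
        have h1 : Filter.Tendsto (fun m : ℕ => (1/(m + 1) : ℝ)) Filter.atTop (nhds 0) :=
          tendsto_one_div_add_atTop_nhds_zero_nat
        have h2 : Filter.Tendsto (fun m : ℕ => (1/(φ m + 1) : ℝ)) Filter.atTop (nhds 0) :=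
          h1.comp hφ.tendsto_atTop
        have h3 : Filter.Tendsto (fun m : ℕ => (1/(φ m + 1) : ℝ) • w)
            Filter.atTop (nhds ((0:ℝ) • w)) := h2.smul_const w
        rw [zero_smul] at h3
        have := (tendsto_const_nhds (x := e')).add h3
        rwa [add_zero] at this
      have hsupport : ∀ x ∈ G, ⟪c₂, x - e'⟫ ≤ 0 := by
        intro x hx
        have hterm : Filter.Tendsto
            (fun m : ℕ => ⟪ch (φ m), x - (e' + (1/(φ m + 1) : ℝ) • w)⟫)
            Filter.atTop (nhds ⟪c₂, x - e'⟫) := by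
          apply Filter.Tendsto.inner hconv
          exact (tendsto_const_nhds (x := x)).sub hzlim
        apply le_of_tendsto hterm
        apply Filter.Eventually.of_forall
        intro m
        exact le_of_lt (hchlt (φ m) x hx)
      -- the strictly smaller face
      set A' : Finset (Fin (k+1)) :=
        A.filter (fun i => ⟪u i, c₂⟫ = A.sup' hAne fun i => ⟪u i, c₂⟫) with hA'
      have hA'sub : A' ⊆ A := Finset.filter_subset _ _
      have hsupG : ∀ i ∈ A, ⟪c₂, u i⟫ ≤ ⟪c₂, e'⟫ := by
        intro i hi
        have hui : u i ∈ G := subset_convexHull ℝ _ ⟨i, by exact_mod_cast hi, rfl⟩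
        have := hsupport (u i) hui
        rw [inner_sub_right] at this
        linarith
      have heqsup : ⟪c₂, e'⟫ = A.sup' hAne fun i => ⟪c₂, u i⟫ := by
        apply le_antisymm
        · exact hull_inner_le u A hAne c₂ he'G
        · obtain ⟨i, hiA, hieq⟩ := Finset.exists_mem_eq_sup' hAne fun i => ⟪c₂, u i⟫
          rw [hieq]
          exact hsupG i hiA
      have he'A' : e' ∈ convexHull ℝ (u '' (A' : Set (Fin (k+1)))) :=
        hull_concentrate u A hAne c₂ he'G heqsup
      have hA'ne : A'.Nonempty := argmax_nonempty A hAne _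
      have hA'proper : A' ≠ A := by
        intro hAA
        have hall : ∀ i ∈ A, ⟪u i, c₂⟫ = A.sup' hAne fun i => ⟪u i, c₂⟫ := by
          intro i hi
          have : i ∈ A' := hAA ▸ hi
          exact (Finset.mem_filter.1 this).2
        have hcorth : ∀ v ∈ V, ⟪v, c₂⟫ = 0 := by
          intro v hv
          induction hv using Submodule.span_induction with
          | mem w' hw' =>
            obtain ⟨i, hi, j, hj, rfl⟩ := hw'
            rw [inner_sub_left, hall i hi, hall j hj, sub_self]
          | zero => rw [inner_zero_left]
          | add a b _ _ ha hb => rw [inner_add_left, ha, hb, add_zero]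
          | smul t a _ ha => rw [inner_smul_left, ha, mul_zero]
        have := hcorth c₂ hc₂V
        rw [real_inner_self_eq_norm_sq, hc₂n] at this
        norm_num at this
      have hcardlt : A'.card < A.card :=
        Finset.card_lt_card ⟨hA'sub, fun h => hA'proper (Finset.Subset.antisymm hA'sub h)⟩
      -- realize A' as an argmax over I of a perturbed direction
      obtain ⟨δ₀, hδ₀, hgap⟩ := gap I hI (fun i => ⟪u i, c₀⟫) (fun i => ⟪u i, c₂⟫)
      obtain ⟨-, hfilt⟩ := hgap (δ₀/2) (by linarith) (by linarith)
      have hreal : A' = I.filter fun i => ⟪u i, c₀ + (δ₀/2) • c₂⟫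
          = I.sup' hI fun i => ⟪u i, c₀ + (δ₀/2) • c₂⟫ := by
        have hfun : ∀ i, ⟪u i, c₀ + (δ₀/2) • c₂⟫ = ⟪u i, c₀⟫ + (δ₀/2) * ⟪u i, c₂⟫ := by
          intro i
          rw [inner_add_right, real_inner_smul_right]
        have e1 : (I.filter fun i => ⟪u i, c₀ + (δ₀/2) • c₂⟫
            = I.sup' hI fun i => ⟪u i, c₀ + (δ₀/2) • c₂⟫)
            = I.filter fun i => (⟪u i, c₀⟫ + (δ₀/2) * ⟪u i, c₂⟫
            = I.sup' hI fun i => ⟪u i, c₀⟫ + (δ₀/2) * ⟪u i, c₂⟫) := by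
          apply Finset.filter_congr
          intro i _
          have e2 : (I.sup' hI fun i => ⟪u i, c₀ + (δ₀/2) • c₂⟫)
              = I.sup' hI fun i => ⟪u i, c₀⟫ + (δ₀/2) * ⟪u i, c₂⟫ :=
            Finset.sup'_congr hI rfl (fun i _ => hfun i)
          rw [hfun i, e2]
        rw [hA', e1, hfilt]
        have hsupeq : (I.filter fun i => ⟪u i, c₀⟫ = I.sup' hI fun i => ⟪u i, c₀⟫).sup'
            (argmax_nonempty I hI fun i => ⟪u i, c₀⟫) (fun i => ⟪u i, c₂⟫)
            = A.sup' hAne fun i => ⟪u i, c₂⟫ :=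
          Finset.sup'_congr _ hc₀.symm (fun i _ => rfl)
        rw [hsupeq, ← hc₀]
      refine IH A' (by omega) ⟨c₀ + (δ₀/2) • c₂, hreal⟩ ⟨e', he'A', he'W⟩

lemma core (I : Finset (Fin (k+1))) (hI : I.Nonempty)
    (W : Submodule ℝ (EuclideanSpace ℝ (Fin p)))
    (hW : (convexHull ℝ (u '' (I : Set (Fin (k+1)))) ∩ ↑W).Nonempty) :
    ∃ c : EuclideanSpace ℝ (Fin p),
      (convexHull ℝ (u '' ((I.filter fun i => ⟪u i, c⟫ = I.sup' hI fun i => ⟪u i, c⟫) :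
          Set (Fin (k+1)))) ∩ ↑W).Nonempty ∧
      dspan u (I.filter fun i => ⟪u i, c⟫ = I.sup' hI fun i => ⟪u i, c⟫) ⊓ W = ⊥ := by
  have hI0 : I = I.filter fun i => ⟪u i, (0:EuclideanSpace ℝ (Fin p))⟫
      = I.sup' hI fun i => ⟪u i, (0:EuclideanSpace ℝ (Fin p))⟫ := by
    have : ∀ i : Fin (k+1), ⟪u i, (0:EuclideanSpace ℝ (Fin p))⟫ = 0 :=
      fun i => inner_zero_right _
    rw [eq_comm]
    apply Finset.filter_true_of_mem
    intro i hi
    rw [this i]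
    rw [show (I.sup' hI fun i => ⟪u i, (0:EuclideanSpace ℝ (Fin p))⟫) = (0:ℝ) by
      rw [show (fun i => ⟪u i, (0:EuclideanSpace ℝ (Fin p))⟫) = fun _ => (0:ℝ) from
        funext this]
      exact Finset.sup'_const hI 0]
  exact core_aux u I hI W I.card I le_rfl ⟨0, hI0⟩ hW

end CoreMain


/-- `S_{X,λpen}(y)` is a singleton for every `y` if and only if every `β`
whose pattern is accessible (`row(X) ∩ ∂pen(β) ≠ ∅`) has pattern complexity at most
`rank(X)`. -/
theorem uniform_uniqueness_iff_complexity {n p k : ℕ}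
    (u : Fin (k + 1) → EuclideanSpace ℝ (Fin p)) (hu : u 0 = 0)
    (pen : EuclideanSpace ℝ (Fin p) → ℝ)
    (hpen : ∀ x, pen x = Finset.univ.sup' Finset.univ_nonempty fun i => ⟪u i, x⟫)
    (X : Matrix (Fin n) (Fin p) ℝ) (lam : ℝ) (hlam : 0 < lam) :
    (∀ y : EuclideanSpace ℝ (Fin n), ∃ b, Smin X lam pen y = {b})
      ↔ ∀ β : EuclideanSpace ℝ (Fin p), (rowSpace X ∩ subdiff pen β).Nonempty →
          Module.finrank ℝ (Submodule.span ℝ {x | subdiff pen x = subdiff pen β})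
            ≤ X.rank := by
  have hpeq : pen = penF u := funext hpen
  subst hpeq
  have hEp : Module.finrank ℝ (EuclideanSpace ℝ (Fin p)) = p := by
    simp [finrank_euclideanSpace]
  constructor
  · -- uniqueness ⇒ complexity bound
    intro huniq β hacc
    by_contra hgt
    push_neg at hgt
    set S : Submodule ℝ (EuclideanSpace ℝ (Fin p)) :=
      Submodule.span ℝ {x | subdiff (penF u) x = subdiff (penF u) β} with hS
    set Kk : Submodule ℝ (EuclideanSpace ℝ (Fin p)) := LinearMap.ker (mulVecLE X) with hKk
    have hK : Module.finrank ℝ Kk = p - X.rank := finrank_ker_mulVecLE X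
    have hrk : X.rank ≤ p := rank_le_p X
    have hsum := Submodule.finrank_sup_add_finrank_inf_eq S Kk
    have hle : Module.finrank ℝ ((S ⊔ Kk : Submodule ℝ (EuclideanSpace ℝ (Fin p)))) ≤ p := by
      exact le_trans (Submodule.finrank_le _) (le_of_eq hEp)
    have hpos : 0 < Module.finrank ℝ ((S ⊓ Kk : Submodule ℝ (EuclideanSpace ℝ (Fin p)))) := by
      omega
    have hnebot : (S ⊓ Kk : Submodule ℝ (EuclideanSpace ℝ (Fin p))) ≠ ⊥ := by
      intro h
      have := Submodule.finrank_eq_zero.2 h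
      omega
    obtain ⟨d, hdmem, hd0⟩ := Submodule.exists_mem_ne_zero_of_ne_bot hnebot
    rw [Submodule.mem_inf] at hdmem
    obtain ⟨hdS, hdK⟩ := hdmem
    rw [LinearMap.mem_ker] at hdK
    obtain ⟨c1, c2, hc1, hc2, hd12⟩ := span_class_diff u β hdS
    obtain ⟨v, hvrow, hvsub⟩ := hacc
    obtain ⟨z, rfl⟩ := hvrow
    set y : EuclideanSpace ℝ (Fin n) := toEuc (X.mulVec c1) + lam • z with hy
    have hXc : mulVecLE X c1 = mulVecLE X c2 := by
      have : mulVecLE X c1 - mulVecLE X c2 = mulVecLE X d := by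
        rw [hd12, map_sub]
      rw [hdK] at this
      have := sub_eq_zero.1 this
      exact this
    have hyc1 : y - toEuc (X.mulVec c1) = lam • z := by
      rw [hy, add_sub_cancel_left]
    have hXc' : toEuc (X.mulVec c2) = toEuc (X.mulVec c1) := hXc.symm
    have hyc2 : y - toEuc (X.mulVec c2) = lam • z := by
      rw [hy, hXc', add_sub_cancel_left]
    have hadj : toEuc (X.transpose.mulVec ((lam • z : EuclideanSpace ℝ (Fin n)))) = lam • toEuc (X.transpose.mulVec z) := by
      rw [← mulVecLE_apply, ← mulVecLE_apply, map_smul]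
    have hc1min : c1 ∈ Smin X lam (penF u) y := by
      apply opt_suff u X hlam (s := toEuc (X.transpose.mulVec z))
      · rw [← hc1] at hvsub
        exact hvsub
      · rw [hyc1, hadj]
    have hc2min : c2 ∈ Smin X lam (penF u) y := by
      apply opt_suff u X hlam (s := toEuc (X.transpose.mulVec z))
      · rw [← hc2] at hvsub
        exact hvsub
      · rw [hyc2, hadj]
    obtain ⟨b, hb⟩ := huniq y
    rw [hb] at hc1min hc2min
    rw [Set.mem_singleton_iff] at hc1min hc2min
    apply hd0
    rw [hd12, hc1min, hc2min, sub_self]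
  · -- complexity bound ⇒ uniqueness
    intro hcomp y
    obtain ⟨b0, hb0⟩ := Smin_nonempty u X hu hlam y
    refine ⟨b0, Set.eq_singleton_iff_unique_mem.2 ⟨hb0, ?_⟩⟩
    intro b1 hb1
    by_contra hne
    obtain ⟨hXb, hpeneq, hmmem, hpenmeq⟩ := Smin_structure u X hlam hb0 hb1
    set m : EuclideanSpace ℝ (Fin p) := (1/2 : ℝ) • (b0 + b1) with hm
    set d : EuclideanSpace ℝ (Fin p) := b0 - b1 with hd
    have hd0 : d ≠ 0 := sub_ne_zero_of_ne (fun h => hne h.symm)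
    have hdK : mulVecLE X d = 0 := by
      rw [hd, map_sub, mulVecLE_apply, mulVecLE_apply, hXb, sub_self]
    have hdu : ∀ i ∈ ISet u m, ⟪u i, d⟫ = 0 := fun i hi =>
      mid_inner_eq u X hlam hb0 hb1 hi
    -- accessibility of the midpoint pattern
    have hsm := opt_nec u X hlam hmmem
    have hsmrow : lam⁻¹ • toEuc (X.transpose.mulVec ((y - toEuc (X.mulVec m) : EuclideanSpace ℝ (Fin n)))) ∈ rowSub X := by
      refine ⟨lam⁻¹ • (y - toEuc (X.mulVec m)), ?_⟩
      rw [map_smul, mulVecLE_apply]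
    have hW : (convexHull ℝ (u '' ((ISet u m : Set (Fin (k+1))))) ∩ ↑(rowSub X)).Nonempty := by
      refine ⟨lam⁻¹ • toEuc (X.transpose.mulVec ((y - toEuc (X.mulVec m) : EuclideanSpace ℝ (Fin n)))), ?_, hsmrow⟩
      rw [← subdiff_eq_convexHull]
      exact hsm
    obtain ⟨c, hcW, hcbot⟩ := core u (ISet u m) (ISet_nonempty u m) (rowSub X) hW
    set A : Finset (Fin (k+1)) :=
      (ISet u m).filter (fun i => ⟪u i, c⟫ = (ISet u m).sup' (ISet_nonempty u m)
        fun i => ⟪u i, c⟫) with hA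
    -- realize the pattern A
    obtain ⟨δ₀, hδ₀, hgap⟩ := penF_gap u m c
    obtain ⟨-, hfilt⟩ := hgap (δ₀/2) (by linarith) (by linarith)
    set β' : EuclideanSpace ℝ (Fin p) := m + (δ₀/2) • c with hβ'
    have hIβ' : ISet u β' = A := hfilt
    -- accessibility of β'
    have haccβ' : (rowSpace X ∩ subdiff (penF u) β').Nonempty := by
      obtain ⟨s', hs'G, hs'W⟩ := hcW
      refine ⟨s', ?_, ?_⟩
      · rw [rowSpace_eq_rowSub]
        exact hs'W
      · rw [subdiff_eq_convexHull, hIβ']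
        exact hs'G
    have hrank := hcomp β' haccβ'
    have hspan := finrank_span_class u β'
    have hdelta : deltaSub u β' = dspan u A := by
      rw [deltaSub, dspan, hIβ']
    rw [hdelta] at hspan
    have hrk : X.rank ≤ p := rank_le_p X
    have hrowrk : Module.finrank ℝ (rowSub X) = X.rank := finrank_rowSub X
    have hsum := Submodule.finrank_sup_add_finrank_inf_eq (dspan u A) (rowSub X)
    have hinf0 : Module.finrank ℝ
        ((dspan u A ⊓ rowSub X : Submodule ℝ (EuclideanSpace ℝ (Fin p)))) = 0 :=
      Submodule.finrank_eq_zero.2 hcbot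
    rw [hinf0, add_zero, hrowrk] at hsum
    have hle : Module.finrank ℝ ((dspan u A ⊔ rowSub X : Submodule ℝ (EuclideanSpace ℝ (Fin p)))) ≤ p := by
      exact le_trans (Submodule.finrank_le _) (le_of_eq hEp)
    have htop : (dspan u A ⊔ rowSub X : Submodule ℝ (EuclideanSpace ℝ (Fin p))) = ⊤ := by
      apply Submodule.eq_top_of_finrank_eq
      rw [hEp]
      omega
    -- d is orthogonal to both parts
    have hdrow : ∀ w ∈ rowSub X, ⟪w, d⟫ = 0 := fun w hw => ker_orth_row X hdK w hw
    have hddspan : ∀ v ∈ dspan u A, ⟪v, d⟫ = 0 := by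
      intro v hv
      induction hv using Submodule.span_induction with
      | mem w' hw' =>
        obtain ⟨i, hi, j, hj, rfl⟩ := hw'
        have hiI : i ∈ ISet u m := Finset.mem_of_mem_filter i hi
        have hjI : j ∈ ISet u m := Finset.mem_of_mem_filter j hj
        rw [inner_sub_left, hdu i hiI, hdu j hjI, sub_self]
      | zero => rw [inner_zero_left]
      | add a b _ _ ha hb => rw [inner_add_left, ha, hb, add_zero]
      | smul t a _ ha => rw [inner_smul_left, ha, mul_zero]
    have hdmem : d ∈ (dspan u A ⊔ rowSub X : Submodule ℝ (EuclideanSpace ℝ (Fin p))) := by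
      rw [htop]
      trivial
    obtain ⟨a, ha, b, hb', hab⟩ := Submodule.mem_sup.1 hdmem
    have h1 : ⟪a + b, d⟫ = 0 := by
      rw [inner_add_left, hddspan a ha, hdrow b hb', add_zero]
    rw [hab] at h1
    exact hd0 (inner_self_eq_zero.1 h1)
end PenBasics
end
end
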